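/- arXiv:1803.04525 — 7 statements merged into one kernel-verified Lean document; each statement's English description precedes it below -/
import Mathlib

section
/- Uniform control of the lower Hamiltonian at optimizing points (Lemma 4.9): Let E be a d-dimensional convex polyhedron, {H_J} a generating set of Hamiltonians, Υ a good containment function for {H_J}, and Ψ a good penalization function. Fix λ > 0, a bounded continuous h : E → ℝ, and let v be a viscosity supersolution of f − λH_‡f = h; let u : E → ℝ be bounded and upper semicontinuous. For every ε ∈ (0,1) and α > 0 let x_{α,ε}, y_{α,ε} ∈ E attain sup_{x,y∈E} [ u(x)/(1−ε) − v(y)/(1+ε) − αΨ(x,y) − (ε/(1−ε))Υ(x) − (ε/(1+ε))Υ(y) ]. Then sup_{ε∈(0,1), α>0} H_‡( y_{α,ε}, α·∇_xΨ(x_{α,ε}, y_{α,ε}) ) < ∞. -/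
open Filter Set
open scoped ENNReal

noncomputable section

/-- `ℝ^d` with the Euclidean structure. -/
abbrev Euc (d : ℕ) := EuclideanSpace ℝ (Fin d)

/-- The `d`-dimensional convex polyhedron
`E = (⋂ᵢ B_{xᵢ,vᵢ}) ∩ (⋂ⱼ B°_{yⱼ,wⱼ})` determined by the data `xs, vs, ys, ws`. -/
def polyE {d k l : ℕ} (xs vs : Fin k → Euc d) (ys ws : Fin l → Euc d) : Set (Euc d) :=
  {z | (∀ i, 0 ≤ (inner ℝ (z - xs i) (vs i) : ℝ)) ∧ ∀ j, 0 < (inner ℝ (z - ys j) (ws j) : ℝ)}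

/-- `E_J = E ∩ ⋂_{i∈J} (B_{xᵢ,vᵢ} \ B°_{xᵢ,vᵢ})`. -/
def polyEJ {d k l : ℕ} (xs vs : Fin k → Euc d) (ys ws : Fin l → Euc d)
    (J : Finset (Fin k)) : Set (Euc d) :=
  {z ∈ polyE xs vs ys ws | ∀ i ∈ J, (inner ℝ (z - xs i) (vs i) : ℝ) = 0}

/-- `Γ_J = ⋂_{i∈J} B_{0,vᵢ}` (with `Γ_∅ = ℝ^d`). -/
def GammaJ {d k : ℕ} (vs : Fin k → Euc d) (J : Finset (Fin k)) : Set (Euc d) :=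
  {w | ∀ i ∈ J, 0 ≤ (inner ℝ (w) (vs i) : ℝ)}

/-- The defining property of a `d`-dimensional convex polyhedron: `E` is contained in
the closure of its interior. -/
def IsPolyhedron {d k l : ℕ} (xs vs : Fin k → Euc d) (ys ws : Fin l → Euc d) : Prop :=
  polyE xs vs ys ws ⊆ closure (interior (polyE xs vs ys ws))

/-- `{H_J}` is a generating set of Hamiltonians: each `H_J` is convex in `p`,
continuously differentiable on `E_J × ℝ^d` (with `p`-gradient `DpH J`), and the
`p`-gradient takes values in `Γ_J`. -/
def IsGenerating {d k l : ℕ} (xs vs : Fin k → Euc d) (ys ws : Fin l → Euc d)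
    (H : Finset (Fin k) → Euc d → Euc d → ℝ)
    (DpH : Finset (Fin k) → Euc d → Euc d → Euc d) : Prop :=
  ∀ J : Finset (Fin k),
    (∀ x ∈ polyEJ xs vs ys ws J, ConvexOn ℝ univ (H J x)) ∧
    ContDiffOn ℝ 1 (fun q : Euc d × Euc d => H J q.1 q.2)
      (polyEJ xs vs ys ws J ×ˢ univ) ∧
    (∀ x ∈ polyEJ xs vs ys ws J, ∀ p, HasGradientAt (fun p' => H J x p') (DpH J x p) p) ∧
    ContinuousOn (fun q : Euc d × Euc d => DpH J q.1 q.2)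
      (polyEJ xs vs ys ws J ×ˢ univ) ∧
    (∀ x ∈ polyEJ xs vs ys ws J, ∀ p, DpH J x p ∈ GammaJ vs J)

/-- The upper Hamiltonian `H_†(x,p) = max{H_J(x,p) : x ∈ E_J}`. -/
def Hdag {d k l : ℕ} (xs vs : Fin k → Euc d) (ys ws : Fin l → Euc d)
    (H : Finset (Fin k) → Euc d → Euc d → ℝ) (x p : Euc d) : ℝ :=
  sSup {r : ℝ | ∃ J : Finset (Fin k), x ∈ polyEJ xs vs ys ws J ∧ r = H J x p}

/-- The lower Hamiltonian `H_‡(x,p) = min{H_J(x,p) : x ∈ E_J}`. -/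
def Hddag {d k l : ℕ} (xs vs : Fin k → Euc d) (ys ws : Fin l → Euc d)
    (H : Finset (Fin k) → Euc d → Euc d → ℝ) (x p : Euc d) : ℝ :=
  sInf {r : ℝ | ∃ J : Finset (Fin k), x ∈ polyEJ xs vs ys ws J ∧ r = H J x p}

/-- `Υ` is a good containment function for the generating set `{H_J}`. -/
def GoodContainment {d k l : ℕ} (xs vs : Fin k → Euc d) (ys ws : Fin l → Euc d)
    (H : Finset (Fin k) → Euc d → Euc d → ℝ) (Υ : Euc d → ℝ) : Prop :=
  (∀ x ∈ polyE xs vs ys ws, 0 ≤ Υ x) ∧ (∃ x₀ ∈ polyE xs vs ys ws, Υ x₀ = 0) ∧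
  ContDiff ℝ 2 Υ ∧
  (∀ c : ℝ, 0 ≤ c → IsCompact {x ∈ polyE xs vs ys ws | Υ x ≤ c}) ∧
  ∃ C : ℝ, ∀ J : Finset (Fin k), ∀ z ∈ polyEJ xs vs ys ws J,
    H J z (gradient Υ z) ≤ C

/-- The Lagrangian `L_J(x,v) = sup_p (⟨p,v⟩ − H_J(x,p))`, with values in `[0,∞]`. -/
def LagJ {d k : ℕ} (H : Finset (Fin k) → Euc d → Euc d → ℝ)
    (J : Finset (Fin k)) (x w : Euc d) : ℝ≥0∞ :=
  ⨆ p : Euc d, ENNReal.ofReal ((inner ℝ (p) (w) : ℝ) - H J x p)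

/-- The Lagrangian `L(x,v) = sup_p (⟨p,v⟩ − H_†(x,p))`, with values in `[0,∞]`. -/
def Lag {d k l : ℕ} (xs vs : Fin k → Euc d) (ys ws : Fin l → Euc d)
    (H : Finset (Fin k) → Euc d → Euc d → ℝ) (x w : Euc d) : ℝ≥0∞ :=
  ⨆ p : Euc d, ENNReal.ofReal ((inner ℝ (p) (w) : ℝ) - Hdag xs vs ys ws H x p)

/-- The auxiliary Lagrangian `L̂(x,v)`, infimum over convex decompositions
`v = Σ λ_J v_J` (with `λ_J = 0` for `J` with `x ∉ E_J`) of `Σ λ_J L_J(x,v_J)`. -/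
def LagHat {d k l : ℕ} (xs vs : Fin k → Euc d) (ys ws : Fin l → Euc d)
    (H : Finset (Fin k) → Euc d → Euc d → ℝ) (x w : Euc d) : ℝ≥0∞ :=
  sInf {r : ℝ≥0∞ | ∃ (lam : Finset (Fin k) → ℝ) (wv : Finset (Fin k) → Euc d),
    (∀ J, 0 ≤ lam J) ∧ (∀ J, x ∉ polyEJ xs vs ys ws J → lam J = 0) ∧
    (∑ J : Finset (Fin k), lam J) = 1 ∧ (∑ J : Finset (Fin k), lam J • wv J) = w ∧
    r = ∑ J : Finset (Fin k), ENNReal.ofReal (lam J) * LagJ H J x (wv J)}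

/-- `Ψ` is a good penalization function on `E`: nonnegative, vanishing exactly on the
diagonal, twice continuously differentiable in both coordinates, and with
antisymmetric gradients `∇_x Ψ(x,y) = −∇_y Ψ(x,y)`. -/
def GoodPenalization {d : ℕ} (E : Set (Euc d)) (Ψ : Euc d → Euc d → ℝ) : Prop :=
  (∀ x y, 0 ≤ Ψ x y) ∧ (∀ x ∈ E, ∀ y ∈ E, (Ψ x y = 0 ↔ x = y)) ∧
  ContDiff ℝ 2 (fun q : Euc d × Euc d => Ψ q.1 q.2) ∧
  ∀ x y : Euc d, gradient (fun x' => Ψ x' y) x = - gradient (fun y' => Ψ x y') y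

/-- Viscosity subsolution of `f − λ·H f = h` on `E`; test functions are compactly
supported `C²` functions. -/
def ViscositySubsolution {d : ℕ} (E : Set (Euc d)) (HH : Euc d → Euc d → ℝ)
    (lam : ℝ) (h u : Euc d → ℝ) : Prop :=
  (∃ C, ∀ x ∈ E, |u x| ≤ C) ∧ UpperSemicontinuousOn u E ∧
  ∀ f : Euc d → ℝ, ContDiff ℝ 2 f → HasCompactSupport f →
    ∀ xn : ℕ → Euc d, (∀ n, xn n ∈ E) →
      Filter.Tendsto (fun n => u (xn n) - f (xn n)) Filter.atTop
        (nhds (sSup ((fun x => u x - f x) '' E))) →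
      Filter.limsup
        (fun n => u (xn n) - lam * HH (xn n) (gradient f (xn n)) - h (xn n))
        Filter.atTop ≤ 0

/-- Viscosity supersolution of `f − λ·H f = h` on `E`. -/
def ViscositySupersolution {d : ℕ} (E : Set (Euc d)) (HH : Euc d → Euc d → ℝ)
    (lam : ℝ) (h v : Euc d → ℝ) : Prop :=
  (∃ C, ∀ x ∈ E, |v x| ≤ C) ∧ LowerSemicontinuousOn v E ∧
  ∀ f : Euc d → ℝ, ContDiff ℝ 2 f → HasCompactSupport f →
    ∀ yn : ℕ → Euc d, (∀ n, yn n ∈ E) →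
      Filter.Tendsto (fun n => v (yn n) - f (yn n)) Filter.atTop
        (nhds (sInf ((fun x => v x - f x) '' E))) →
      0 ≤ Filter.liminf
        (fun n => v (yn n) - lam * HH (yn n) (gradient f (yn n)) - h (yn n))
        Filter.atTop

/-- Auxiliary: gradient of a linear combination of two real-valued functions. -/
lemma hasGradientAt_comb {d : ℕ} {f g : Euc d → ℝ} {f' g' x : Euc d} (c₁ c₂ : ℝ)
    (hf : HasGradientAt f f' x) (hg : HasGradientAt g g' x) :
    HasGradientAt (fun z => c₁ * f z + c₂ * g z) (c₁ • f' + c₂ • g') x := by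
  have h := (hf.hasFDerivAt.const_mul c₁).add (hg.hasFDerivAt.const_mul c₂)
  refine hasGradientAt_iff_hasFDerivAt.mpr ?_
  have e : (InnerProductSpace.toDual ℝ (Euc d)) (c₁ • f' + c₂ • g') =
      c₁ • (InnerProductSpace.toDual ℝ (Euc d)) f' + c₂ • (InnerProductSpace.toDual ℝ (Euc d)) g' := by
    ext w
    simp [InnerProductSpace.toDual_apply_apply, inner_add_left, real_inner_smul_left]
  rw [e]
  exact h

set_option maxHeartbeats 1600000 in
/-- Uniform control of the lower Hamiltonian at optimizing points (Lemma 4.9): given a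
generating set of Hamiltonians with good containment function `Υ` and good penalization
function `Ψ`, a bounded usc `u`, a viscosity supersolution `v` of `f − λH_‡ f = h`, and
a family `(X ε α, Y ε α)` of maximizers of the doubled objective, the quantities
`H_‡(y_{α,ε}, α∇_xΨ(x_{α,ε},y_{α,ε}))` are bounded above uniformly in `ε ∈ (0,1)` and
`α > 0`. -/
theorem lower_hamiltonian_bounded_at_optimizers {d k l : ℕ}
    (xs vs : Fin k → Euc d) (ys ws : Fin l → Euc d)
    (hpoly : IsPolyhedron xs vs ys ws)
    (H : Finset (Fin k) → Euc d → Euc d → ℝ)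
    (DpH : Finset (Fin k) → Euc d → Euc d → Euc d)
    (hgen : IsGenerating xs vs ys ws H DpH)
    (Υ : Euc d → ℝ) (hΥ : GoodContainment xs vs ys ws H Υ)
    (Ψ : Euc d → Euc d → ℝ) (hΨ : GoodPenalization (polyE xs vs ys ws) Ψ)
    (lam : ℝ) (hlam : 0 < lam)
    (h : Euc d → ℝ) (hhb : ∃ C, ∀ x ∈ polyE xs vs ys ws, |h x| ≤ C)
    (hhc : ContinuousOn h (polyE xs vs ys ws))
    (u : Euc d → ℝ) (hub : ∃ C, ∀ x ∈ polyE xs vs ys ws, |u x| ≤ C)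
    (husc : UpperSemicontinuousOn u (polyE xs vs ys ws))
    (v : Euc d → ℝ)
    (hv : ViscositySupersolution (polyE xs vs ys ws) (Hddag xs vs ys ws H) lam h v)
    (X Y : ℝ → ℝ → Euc d)
    (hXY : ∀ ε ∈ Ioo (0:ℝ) 1, ∀ α > (0:ℝ),
      X ε α ∈ polyE xs vs ys ws ∧ Y ε α ∈ polyE xs vs ys ws ∧
      ∀ a ∈ polyE xs vs ys ws, ∀ b ∈ polyE xs vs ys ws,
        u a / (1 - ε) - v b / (1 + ε) - α * Ψ a b -
            (ε / (1 - ε)) * Υ a - (ε / (1 + ε)) * Υ b ≤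
          u (X ε α) / (1 - ε) - v (Y ε α) / (1 + ε) - α * Ψ (X ε α) (Y ε α) -
            (ε / (1 - ε)) * Υ (X ε α) - (ε / (1 + ε)) * Υ (Y ε α)) :
    ∃ C : ℝ, ∀ ε ∈ Ioo (0:ℝ) 1, ∀ α > (0:ℝ),
      Hddag xs vs ys ws H (Y ε α)
        (α • gradient (fun x' => Ψ x' (Y ε α)) (X ε α)) ≤ C := by
  obtain ⟨Cv, hCv⟩ := hv.1
  obtain ⟨Ch, hCh⟩ := hhb
  obtain ⟨CΥ, hCΥ⟩ := hΥ.2.2.2.2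
  refine ⟨max ((Cv + Ch) / lam) 0 + max CΥ 0, ?_⟩
  intro ε hε α hα
  obtain ⟨hε0, hε1⟩ := hε
  have h1ε : (0:ℝ) < 1 + ε := by linarith
  set x := X ε α with hxdef
  set y := Y ε α with hydef
  obtain ⟨hxE, hyE, hopt⟩ := hXY ε ⟨hε0, hε1⟩ α hα
  -- the test function
  set c₁ : ℝ := -((1 + ε) * α) with hc₁
  set c₂ : ℝ := -ε with hc₂
  set G : Euc d → ℝ := fun b => c₁ * Ψ x b + c₂ * Υ b with hG
  -- optimality in the second variable
  have hGle : ∀ b ∈ polyE xs vs ys ws, G b - G y ≤ v b - v y := by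
    intro b hbE
    have h5 := hopt x hxE b hbE
    have h3 : v y / (1 + ε) + α * Ψ x y + ε / (1 + ε) * Υ y ≤
        v b / (1 + ε) + α * Ψ x b + ε / (1 + ε) * Υ b := by linarith
    have h4 := mul_le_mul_of_nonneg_left h3 h1ε.le
    have e1 : ∀ s t r : ℝ, (1 + ε) * (s / (1 + ε) + α * t + ε / (1 + ε) * r) =
        s + (1 + ε) * α * t + ε * r := by
      intro s t r; field_simp
    rw [e1, e1] at h4
    simp only [hG, hc₁, hc₂]
    nlinarith [h4]
  -- bump functions
  set η : ContDiffBump y := ⟨1, 2, one_pos, one_lt_two⟩ with hη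
  set χ : ContDiffBump y := ⟨2, 3, two_pos, by norm_num⟩ with hχ
  set f : Euc d → ℝ := fun b => χ b * (G b - G y) + 2 * Cv * η b with hf
  have hχy : χ y = 1 := χ.one_of_mem_closedBall (Metric.mem_closedBall_self (by norm_num))
  have hηy : η y = 1 := η.one_of_mem_closedBall (Metric.mem_closedBall_self (by norm_num))
  have hfy : f y = 2 * Cv := by simp [hf, hχy, hηy]
  have hCv0 : 0 ≤ Cv := le_trans (abs_nonneg _) (hCv y hyE)
  -- smoothness of the test function
  have hΨx : ContDiff ℝ 2 (fun b => Ψ x b) :=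
    hΨ.2.2.1.comp (contDiff_const.prodMk contDiff_id)
  have hGc : ContDiff ℝ 2 G :=
    (contDiff_const.mul hΨx).add (contDiff_const.mul hΥ.2.2.1)
  have hf2 : ContDiff ℝ 2 f :=
    (χ.contDiff.mul (hGc.sub contDiff_const)).add (contDiff_const.mul η.contDiff)
  have hfcs : HasCompactSupport f := by
    exact (χ.hasCompactSupport.mul_right).add (η.hasCompactSupport.mul_left)
  -- gradient of the test function at y
  set q1 : Euc d := gradient (fun y' => Ψ x y') y with hq1def
  set qΥ : Euc d := gradient Υ y with hqΥdef
  have hq1 : HasGradientAt (fun y' => Ψ x y') q1 y :=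
    ((hΨx.differentiable (by norm_num)).differentiableAt).hasGradientAt
  have hqΥ : HasGradientAt Υ qΥ y :=
    ((hΥ.2.2.1.differentiable (by norm_num)).differentiableAt).hasGradientAt
  set q : Euc d := c₁ • q1 + c₂ • qΥ with hqdef
  have hGgrad : HasGradientAt G q y := hasGradientAt_comb c₁ c₂ hq1 hqΥ
  have hfeq : f =ᶠ[nhds y] fun b => G b - G y + 2 * Cv := by
    filter_upwards [Metric.ball_mem_nhds y one_pos] with b hb
    have hb2 : b ∈ Metric.closedBall y 2 :=
      Metric.closedBall_subset_closedBall (by norm_num) (Metric.ball_subset_closedBall hb)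
    have hb1 : b ∈ Metric.closedBall y 1 := Metric.ball_subset_closedBall hb
    simp [hf, χ.one_of_mem_closedBall hb2, η.one_of_mem_closedBall hb1]
  have hfgrad : HasGradientAt f q y := by
    have h' : HasFDerivAt (fun b => G b - G y + 2 * Cv)
        ((InnerProductSpace.toDual ℝ (Euc d)) q) y :=
      (hGgrad.hasFDerivAt.sub_const (G y)).add_const (2 * Cv)
    exact (hasGradientAt_iff_hasFDerivAt.mpr h').congr_of_eventuallyEq hfeq
  have hgradf : gradient f y = q := hfgrad.gradient
  -- f b ≤ v b - v y + 2Cv on E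
  have hfb : ∀ b ∈ polyE xs vs ys ws, f b ≤ v b - v y + 2 * Cv := by
    intro b hbE
    have hvb : -2 * Cv ≤ v b - v y := by
      have h1 := abs_le.mp (hCv b hbE)
      have h2 := abs_le.mp (hCv y hyE)
      linarith
    by_cases hball : b ∈ Metric.closedBall y 2
    · have hχb : χ b = 1 := χ.one_of_mem_closedBall hball
      have hGb := hGle b hbE
      have hηb : η b ≤ 1 := η.le_one
      have hηb0 : 0 ≤ η b := η.nonneg
      simp only [hf, hχb, one_mul]
      nlinarith
    · have hηb : η b = 0 := by
        by_contra hne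
        exact hball (Metric.ball_subset_closedBall
          (η.support_eq ▸ Function.mem_support.mpr hne))
      have hGb := hGle b hbE
      have hχ0 : 0 ≤ χ b := χ.nonneg
      have hχ1 : χ b ≤ 1 := χ.le_one
      simp only [hf, hηb, mul_zero, add_zero]
      rcases le_total (G b - G y) 0 with hs | hs
      · nlinarith
      · nlinarith
  -- the infimum over E of v - f is attained at y
  have hleast : IsLeast ((fun z => v z - f z) '' polyE xs vs ys ws) (v y - f y) := by
    constructor
    · exact ⟨y, hyE, rfl⟩
    · rintro r ⟨b, hbE, rfl⟩
      have hfb' := hfb b hbE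
      show v y - f y ≤ v b - f b
      rw [hfy]
      linarith
  have htend : Filter.Tendsto (fun _ : ℕ => v y - f y) Filter.atTop
      (nhds (sInf ((fun z => v z - f z) '' polyE xs vs ys ws))) := by
    rw [hleast.csInf_eq]
    exact tendsto_const_nhds
  have h0 := hv.2.2 f hf2 hfcs (fun _ => y) (fun _ => hyE) htend
  have hvis : 0 ≤ v y - lam * Hddag xs vs ys ws H y (gradient f y) - h y := by
    simpa [Filter.liminf_const] using h0
  rw [hgradf] at hvis
  -- choose the minimizing J at (y, q)
  have hyJempty : y ∈ polyEJ xs vs ys ws ∅ := ⟨hyE, by simp⟩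
  set S : Set ℝ := {r : ℝ | ∃ J : Finset (Fin k), y ∈ polyEJ xs vs ys ws J ∧ r = H J y q}
    with hSdef
  have hSne : S.Nonempty := ⟨H ∅ y q, ∅, hyJempty, rfl⟩
  have hSfin : S.Finite := by
    apply (Set.finite_range (fun J : Finset (Fin k) => H J y q)).subset
    rintro r ⟨J, _, rfl⟩; exact ⟨J, rfl⟩
  obtain ⟨J₀, hJ₀mem, hJ₀val⟩ := hSne.csInf_mem hSfin
  have hsInfS : Hddag xs vs ys ws H y q = H J₀ y q := hJ₀val
  -- bound Hddag y q from the viscosity inequality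
  have hHq : Hddag xs vs ys ws H y q ≤ (Cv + Ch) / lam := by
    have h1 := abs_le.mp (hCv y hyE)
    have h2 := abs_le.mp (hCh y hyE)
    rw [le_div_iff₀ hlam]
    nlinarith
  -- convexity step
  set a : ℝ := 1 / (1 + ε) with hadef
  set b : ℝ := ε / (1 + ε) with hbdef
  have h1ne : (1 + ε) ≠ 0 := ne_of_gt h1ε
  have ha0 : 0 ≤ a := by rw [hadef]; positivity
  have hb0 : 0 ≤ b := by rw [hbdef]; positivity
  have hab : a + b = 1 := by rw [hadef, hbdef]; field_simp
  have ha1 : a ≤ 1 := by rw [hadef, div_le_one h1ε]; linarith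
  have hb1 : b ≤ 1 := by rw [hbdef, div_le_one h1ε]; linarith
  have hconv := ((hgen J₀).1 y hJ₀mem).2 (Set.mem_univ q) (Set.mem_univ qΥ) ha0 hb0 hab
  simp only [smul_eq_mul] at hconv
  -- the argument in the goal
  have e₂ : a * c₂ + b = 0 := by rw [hadef, hc₂, hbdef]; field_simp; ring
  have e₁ : a * c₁ = -α := by rw [hadef, hc₁]; field_simp
  have hparg : α • gradient (fun x' => Ψ x' y) x = a • q + b • qΥ := by
    rw [hΨ.2.2.2 x y, ← hq1def, hqdef, smul_add, smul_smul, smul_smul, add_assoc,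
      ← add_smul, e₂, zero_smul, add_zero, e₁, smul_neg, ← neg_smul]
  -- bound on the lower Hamiltonian at (y, α • p)
  have hle1 : Hddag xs vs ys ws H y (α • gradient (fun x' => Ψ x' y) x) ≤
      H J₀ y (α • gradient (fun x' => Ψ x' y) x) := by
    apply csInf_le
    · apply Set.Finite.bddBelow
      apply (Set.finite_range
        (fun J : Finset (Fin k) => H J y (α • gradient (fun x' => Ψ x' y) x))).subset
      rintro r ⟨J, _, rfl⟩; exact ⟨J, rfl⟩
    · exact ⟨J₀, hJ₀mem, rfl⟩
  rw [hparg] at hle1 ⊢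
  refine le_trans hle1 (le_trans hconv ?_)
  have hHqΥ : H J₀ y qΥ ≤ CΥ := hCΥ J₀ y hJ₀mem
  have hterm1 : a * H J₀ y q ≤ max ((Cv + Ch) / lam) 0 := by
    have hHJ : H J₀ y q ≤ (Cv + Ch) / lam := hsInfS ▸ hHq
    rcases le_total (H J₀ y q) 0 with hs | hs
    · have : a * H J₀ y q ≤ 0 := mul_nonpos_of_nonneg_of_nonpos ha0 hs
      exact le_trans this (le_max_right _ _)
    · calc a * H J₀ y q ≤ 1 * H J₀ y q := mul_le_mul_of_nonneg_right ha1 hs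
        _ = H J₀ y q := one_mul _
        _ ≤ (Cv + Ch) / lam := hHJ
        _ ≤ _ := le_max_left _ _
  have hterm2 : b * H J₀ y qΥ ≤ max CΥ 0 := by
    have h1 : b * H J₀ y qΥ ≤ b * CΥ := mul_le_mul_of_nonneg_left hHqΥ hb0
    rcases le_total CΥ 0 with hs | hs
    · have : b * CΥ ≤ 0 := mul_nonpos_of_nonneg_of_nonpos hb0 hs
      exact le_trans h1 (le_trans this (le_max_right _ _))
    · calc b * H J₀ y qΥ ≤ b * CΥ := h1
        _ ≤ 1 * CΥ := mul_le_mul_of_nonneg_right hb1 hs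
        _ = CΥ := one_mul _
        _ ≤ _ := le_max_left _ _
  linarith
end
end

section
/- Lower semicontinuity and compact sublevel sets of the Lagrangian (Proposition 4.15(a)): Let E be a d-dimensional convex polyhedron, {H_J} a generating set of Hamiltonians admitting a good containment function Υ, and L(x,v) = sup_{p∈ℝ^d}(⟨p,v⟩ − H_†(x,p)). Then L : E × ℝ^d → [0,∞] is lower semicontinuous, and for every compact set K ⊆ E and every c ∈ ℝ the set {(x,v) ∈ K × ℝ^d : L(x,v) ≤ c} is compact in E × ℝ^d. -/
open Filter Set
open scoped ENNReal

noncomputable section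

open Topology

section Aux

variable {d k l : ℕ} {xs vs : Fin k → Euc d} {ys ws : Fin l → Euc d}
  {H : Finset (Fin k) → Euc d → Euc d → ℝ}

lemma hdag_spec (xs vs : Fin k → Euc d) (ys ws : Fin l → Euc d)
    (H : Finset (Fin k) → Euc d → Euc d → ℝ) (x p : Euc d)
    (hx : x ∈ polyE xs vs ys ws) :
    (∃ J, x ∈ polyEJ xs vs ys ws J ∧ Hdag xs vs ys ws H x p = H J x p) ∧
    (∀ J, x ∈ polyEJ xs vs ys ws J → H J x p ≤ Hdag xs vs ys ws H x p) := by
  set S := {r : ℝ | ∃ J : Finset (Fin k), x ∈ polyEJ xs vs ys ws J ∧ r = H J x p} with hS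
  have hfin : S.Finite := by
    apply (Set.finite_range (fun J : Finset (Fin k) => H J x p)).subset
    rintro r ⟨J, _, rfl⟩; exact ⟨J, rfl⟩
  have hne : S.Nonempty :=
    ⟨H ∅ x p, ∅, ⟨hx, fun i hi => absurd hi (Finset.notMem_empty i)⟩, rfl⟩
  constructor
  · obtain ⟨J, hJ, hr⟩ := hne.csSup_mem hfin
    exact ⟨J, hJ, hr⟩
  · intro J hJ
    exact le_csSup hfin.bddAbove ⟨J, hJ, rfl⟩

lemma inner_cont (a b : Euc d) : Continuous fun z : Euc d => (inner ℝ (z - a) b : ℝ) :=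
  (continuous_id.sub continuous_const).inner continuous_const

lemma hdag_usc_event (hgen : ∀ J : Finset (Fin k),
      ContinuousOn (fun q : Euc d × Euc d => H J q.1 q.2) (polyEJ xs vs ys ws J ×ˢ univ))
    (p x : Euc d) (hx : x ∈ polyE xs vs ys ws) {ε : ℝ} (hε : 0 < ε) :
    ∀ᶠ z in 𝓝[polyE xs vs ys ws] x,
      Hdag xs vs ys ws H z p < Hdag xs vs ys ws H x p + ε := by
  have ev1 : ∀ᶠ z in 𝓝[polyE xs vs ys ws] x, ∀ i,
      0 < (inner ℝ (x - xs i) (vs i) : ℝ) → 0 < (inner ℝ (z - xs i) (vs i) : ℝ) := by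
    rw [eventually_all]
    intro i
    by_cases h : 0 < (inner ℝ (x - xs i) (vs i) : ℝ)
    · have := ((inner_cont (xs i) (vs i)).tendsto x).eventually (eventually_gt_nhds h)
      exact (this.mono fun z hz _ => hz).filter_mono nhdsWithin_le_nhds
    · exact Filter.Eventually.of_forall fun z hz => absurd hz h
  have ev2 : ∀ᶠ z in 𝓝[polyE xs vs ys ws] x, ∀ J : Finset (Fin k),
      x ∈ polyEJ xs vs ys ws J → z ∈ polyEJ xs vs ys ws J →
      H J z p < Hdag xs vs ys ws H x p + ε := by
    rw [eventually_all]
    intro J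
    by_cases hxJ : x ∈ polyEJ xs vs ys ws J
    · have h1 : ContinuousWithinAt (fun z => H J z p) (polyEJ xs vs ys ws J) x := by
        have hc : ContinuousWithinAt (fun q : Euc d × Euc d => H J q.1 q.2)
            (polyEJ xs vs ys ws J ×ˢ univ) (x, p) := hgen J (x, p) ⟨hxJ, mem_univ p⟩
        have h2 : ContinuousWithinAt (fun z : Euc d => (z, p)) (polyEJ xs vs ys ws J) x :=
          (continuous_id.prodMk continuous_const).continuousWithinAt
        have := hc.comp (f := fun z : Euc d => (z, p)) h2 (fun z hz => ⟨hz, mem_univ p⟩)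
        exact this
      have hlt : H J x p < Hdag xs vs ys ws H x p + ε :=
        lt_of_le_of_lt ((hdag_spec xs vs ys ws H x p hx).2 J hxJ)
          (lt_add_of_pos_right _ hε)
      have hev : ∀ᶠ z in 𝓝[polyEJ xs vs ys ws J] x,
          H J z p < Hdag xs vs ys ws H x p + ε :=
        h1.eventually (eventually_lt_nhds hlt)
      have hev' : ∀ᶠ z in 𝓝 x, z ∈ polyEJ xs vs ys ws J →
          H J z p < Hdag xs vs ys ws H x p + ε := eventually_nhdsWithin_iff.mp hev
      exact (hev'.filter_mono nhdsWithin_le_nhds).mono fun z h _ => h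
    · exact Filter.Eventually.of_forall fun z h => absurd h hxJ
  filter_upwards [ev1, ev2, self_mem_nhdsWithin] with z h1 h2 hzE
  obtain ⟨J₀, hzJ₀, heq⟩ := (hdag_spec xs vs ys ws H z p hzE).1
  have hxJ₀ : x ∈ polyEJ xs vs ys ws J₀ := by
    refine ⟨hx, fun i hi => ?_⟩
    by_contra hne
    have hpos : 0 < (inner ℝ (x - xs i) (vs i) : ℝ) := lt_of_le_of_ne (hx.1 i) (Ne.symm hne)
    have := h1 i hpos
    rw [hzJ₀.2 i hi] at this
    exact lt_irrefl 0 this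
  rw [heq]
  exact h2 J₀ hxJ₀ hzJ₀

lemma lag_lsc (hgen : ∀ J : Finset (Fin k),
      ContinuousOn (fun q : Euc d × Euc d => H J q.1 q.2) (polyEJ xs vs ys ws J ×ˢ univ)) :
    LowerSemicontinuousOn (fun q : Euc d × Euc d => Lag xs vs ys ws H q.1 q.2)
      (polyE xs vs ys ws ×ˢ univ) := by
  have key : ∀ p : Euc d, LowerSemicontinuousOn
      (fun q : Euc d × Euc d => (inner ℝ p q.2 : ℝ) - Hdag xs vs ys ws H q.1 p)
      (polyE xs vs ys ws ×ˢ univ) := by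
    intro p q hq y hy
    set f := fun q : Euc d × Euc d => (inner ℝ p q.2 : ℝ) - Hdag xs vs ys ws H q.1 p with hf
    have hε : 0 < (f q - y) / 2 := by
      simp only [hf]
      simp only [hf] at hy
      linarith
    set ε := (f q - y) / 2 with hεdef
    have ht : Filter.Tendsto Prod.fst (𝓝[polyE xs vs ys ws ×ˢ univ] q)
        (𝓝[polyE xs vs ys ws] q.1) :=
      (continuous_fst.continuousWithinAt).tendsto_nhdsWithin (fun z hz => hz.1)
    have evA := ht.eventually (hdag_usc_event hgen p q.1 hq.1 hε)
    have hc2 : Continuous fun z : Euc d × Euc d => (inner ℝ p z.2 : ℝ) :=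
      continuous_const.inner continuous_snd
    have evB : ∀ᶠ z in 𝓝[polyE xs vs ys ws ×ˢ univ] q,
        (inner ℝ p q.2 : ℝ) - ε < (inner ℝ p z.2 : ℝ) :=
      ((hc2.tendsto q).eventually (eventually_gt_nhds (by linarith))).filter_mono
        nhdsWithin_le_nhds
    filter_upwards [evA, evB] with z hA hB
    have : y = f q - 2 * ε := by rw [hεdef]; ring
    simp only [hf] at hA hB ⊢
    rw [this]
    simp only [hf]
    linarith
  have : (fun q : Euc d × Euc d => Lag xs vs ys ws H q.1 q.2) =
      fun q : Euc d × Euc d => ⨆ p : Euc d,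
        ENNReal.ofReal ((inner ℝ p q.2 : ℝ) - Hdag xs vs ys ws H q.1 p) := rfl
  rw [this]
  exact lowerSemicontinuousOn_iSup fun p =>
    ENNReal.continuous_ofReal.comp_lowerSemicontinuousOn (key p) (fun _ _ h => ENNReal.ofReal_le_ofReal h)

lemma hdag_bdd (hgen : ∀ J : Finset (Fin k),
      ContinuousOn (fun q : Euc d × Euc d => H J q.1 q.2) (polyEJ xs vs ys ws J ×ˢ univ))
    {K : Set (Euc d)} (hK : K ⊆ polyE xs vs ys ws) (hKc : IsCompact K) (p : Euc d) :
    ∃ M : ℝ, ∀ x ∈ K, Hdag xs vs ys ws H x p ≤ M := by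
  have hMJ : ∀ J : Finset (Fin k), ∃ MJ : ℝ,
      ∀ x ∈ K, x ∈ polyEJ xs vs ys ws J → H J x p ≤ MJ := by
    intro J
    set KJ := K ∩ {z : Euc d | ∀ i ∈ J, (inner ℝ (z - xs i) (vs i) : ℝ) = 0} with hKJ
    have hKJc : IsCompact KJ := by
      apply hKc.inter_right
      have : {z : Euc d | ∀ i ∈ J, (inner ℝ (z - xs i) (vs i) : ℝ) = 0} =
          ⋂ i ∈ J, {z : Euc d | (inner ℝ (z - xs i) (vs i) : ℝ) = 0} := by
        ext z; simp
      rw [this]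
      exact isClosed_biInter fun i _ =>
        isClosed_eq (inner_cont (xs i) (vs i)) continuous_const
    have hsub : KJ ⊆ polyEJ xs vs ys ws J := fun z hz => ⟨hK hz.1, hz.2⟩
    have hcont : ContinuousOn (fun z : Euc d => H J z p) (polyEJ xs vs ys ws J) := by
      intro z hz
      have hc : ContinuousWithinAt (fun q : Euc d × Euc d => H J q.1 q.2)
          (polyEJ xs vs ys ws J ×ˢ univ) (z, p) := hgen J (z, p) ⟨hz, mem_univ p⟩
      have h2 : ContinuousWithinAt (fun z : Euc d => (z, p)) (polyEJ xs vs ys ws J) z :=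
        (continuous_id.prodMk continuous_const).continuousWithinAt
      have := hc.comp (f := fun z : Euc d => (z, p)) h2 (fun w hw => ⟨hw, mem_univ p⟩)
      exact this
    obtain ⟨MJ, hMJ⟩ := hKJc.exists_bound_of_continuousOn (hcont.mono hsub)
    refine ⟨MJ, fun x hx hxJ => ?_⟩
    have hxKJ : x ∈ KJ := ⟨hx, hxJ.2⟩
    exact le_trans (le_abs_self _) (hMJ x hxKJ)
  choose MJ hMJ using hMJ
  have hne : (Finset.univ : Finset (Finset (Fin k))).Nonempty := ⟨∅, Finset.mem_univ ∅⟩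
  refine ⟨Finset.univ.sup' hne MJ, fun x hx => ?_⟩
  obtain ⟨J₀, hxJ₀, heq⟩ := (hdag_spec xs vs ys ws H x p (hK hx)).1
  rw [heq]
  exact le_trans (hMJ J₀ x hx hxJ₀) (Finset.le_sup' MJ (Finset.mem_univ J₀))

end Aux

/-- Lower semicontinuity and compact sublevel sets of the Lagrangian
(Proposition 4.15(a)): `L` is lower semicontinuous on `E × ℝ^d`, and for every compact
`K ⊆ E` and every `c ∈ ℝ` the set `{(x,v) ∈ K × ℝ^d : L(x,v) ≤ c}` is compact. -/
theorem lag_lsc_and_compact_sublevels {d k l : ℕ}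
    (xs vs : Fin k → Euc d) (ys ws : Fin l → Euc d)
    (hpoly : IsPolyhedron xs vs ys ws)
    (H : Finset (Fin k) → Euc d → Euc d → ℝ)
    (DpH : Finset (Fin k) → Euc d → Euc d → Euc d)
    (hgen : IsGenerating xs vs ys ws H DpH)
    (Υ : Euc d → ℝ) (hΥ : GoodContainment xs vs ys ws H Υ) :
    LowerSemicontinuousOn (fun q : Euc d × Euc d => Lag xs vs ys ws H q.1 q.2)
      (polyE xs vs ys ws ×ˢ univ) ∧
    ∀ K ⊆ polyE xs vs ys ws, IsCompact K → ∀ c : ℝ,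
      IsCompact {q : Euc d × Euc d |
        q.1 ∈ K ∧ Lag xs vs ys ws H q.1 q.2 ≤ ENNReal.ofReal c} := by
  have hcont : ∀ J : Finset (Fin k), ContinuousOn
      (fun q : Euc d × Euc d => H J q.1 q.2) (polyEJ xs vs ys ws J ×ˢ univ) :=
    fun J => (hgen J).2.1.continuousOn
  have hlsc := lag_lsc hcont
  refine ⟨hlsc, ?_⟩
  intro K hK hKc c
  set S := {q : Euc d × Euc d |
    q.1 ∈ K ∧ Lag xs vs ys ws H q.1 q.2 ≤ ENNReal.ofReal c} with hSdef
  have hclosed : IsClosed S := by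
    rw [← closure_subset_iff_isClosed]
    intro q hq
    have hq1 : q.1 ∈ K := by
      have hcl : closure S ⊆ K ×ˢ (univ : Set (Euc d)) :=
        closure_minimal (fun z hz => ⟨hz.1, mem_univ _⟩) (hKc.isClosed.prod isClosed_univ)
      exact (hcl hq).1
    refine ⟨hq1, ?_⟩
    by_contra hgt
    push_neg at hgt
    have hqE : q ∈ polyE xs vs ys ws ×ˢ (univ : Set (Euc d)) := ⟨hK hq1, mem_univ _⟩
    have h1 := hlsc q hqE _ hgt
    have h2 : ∀ᶠ z in 𝓝[S] q, ENNReal.ofReal c < Lag xs vs ys ws H z.1 z.2 :=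
      h1.filter_mono (nhdsWithin_mono q
        (show S ⊆ polyE xs vs ys ws ×ˢ univ from fun z hz => ⟨hK hz.1, mem_univ _⟩))
    have hne : (𝓝[S] q).NeBot := mem_closure_iff_nhdsWithin_neBot.mp hq
    obtain ⟨z, hz1, hz2⟩ := (h2.and self_mem_nhdsWithin).exists
    exact absurd hz2.2 (not_le.mpr hz1)
  have hbM : ∀ p : Euc d, ∃ M, ∀ x ∈ K, Hdag xs vs ys ws H x p ≤ M :=
    fun p => hdag_bdd hcont hK hKc p
  choose M hM using hbM
  set c' := max c 0 with hc'
  have hkey : ∀ q ∈ S, ∀ p : Euc d, (inner ℝ p q.2 : ℝ) ≤ c' + M p := by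
    intro q hq p
    have h1 : ENNReal.ofReal ((inner ℝ p q.2 : ℝ) - Hdag xs vs ys ws H q.1 p) ≤
        ENNReal.ofReal c' := by
      refine le_trans ?_ (le_trans hq.2 (ENNReal.ofReal_le_ofReal (le_max_left c 0)))
      exact le_iSup (fun p : Euc d =>
        ENNReal.ofReal ((inner ℝ p q.2 : ℝ) - Hdag xs vs ys ws H q.1 p)) p
    have h2 : (inner ℝ p q.2 : ℝ) - Hdag xs vs ys ws H q.1 p ≤ c' := by
      by_contra hgt2
      push_neg at hgt2
      have := (ENNReal.ofReal_lt_ofReal_iff_of_nonneg (le_max_right c 0)).mpr hgt2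
      exact absurd h1 (not_le.mpr this)
    have h3 := hM p q.1 hq.1
    linarith
  set b : Fin d → ℝ := fun i =>
    max (c' + M (EuclideanSpace.single i 1)) (c' + M (-EuclideanSpace.single i 1)) with hb
  have hcoord : ∀ q ∈ S, ∀ i : Fin d, |q.2 i| ≤ b i := by
    intro q hq i
    have h1 := hkey q hq (EuclideanSpace.single i 1)
    have h2 := hkey q hq (-EuclideanSpace.single i 1)
    have e1 : (inner ℝ (EuclideanSpace.single i (1 : ℝ)) q.2 : ℝ) = q.2 i := by
      simp [EuclideanSpace.inner_single_left]
    have e2 : (inner ℝ (-EuclideanSpace.single i (1 : ℝ)) q.2 : ℝ) = -q.2 i := by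
      simp [inner_neg_left, EuclideanSpace.inner_single_left]
    rw [e1] at h1
    rw [e2] at h2
    have hA : c' + M (EuclideanSpace.single i 1) ≤ b i := le_max_left _ _
    have hB : c' + M (-EuclideanSpace.single i 1) ≤ b i := le_max_right _ _
    exact abs_le.mpr ⟨by linarith, by linarith⟩
  set R := Real.sqrt (∑ i : Fin d, (b i) ^ 2) with hR
  have hnorm : ∀ q ∈ S, ‖q.2‖ ≤ R := by
    intro q hq
    rw [EuclideanSpace.norm_eq]
    apply Real.sqrt_le_sqrt
    apply Finset.sum_le_sum
    intro i _
    rw [Real.norm_eq_abs]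
    exact pow_le_pow_left₀ (abs_nonneg _) (hcoord q hq i) 2
  have hbounded : Bornology.IsBounded S := by
    apply Bornology.IsBounded.subset
      (hKc.isBounded.prod (Metric.isBounded_closedBall (x := (0 : Euc d)) (r := R)))
    intro q hq
    refine ⟨hq.1, ?_⟩
    simpa [Metric.mem_closedBall, dist_zero_right] using hnorm q hq
  exact Metric.isCompact_of_isClosed_isBounded hclosed hbounded
end
end

section
/- Compact containment of trajectories with bounded Lagrangian cost (Proposition 4.15(b)): Let E be a d-dimensional convex polyhedron, {H_J} a generating set of Hamiltonians admitting a good containment function Υ, and L(x,v) = sup_{p∈ℝ^d}(⟨p,v⟩ − H_†(x,p)). Then for every compact K ⊆ E, every T > 0 and every M ≥ 0 there exists a compact set K' = K'(K,T,M) ⊆ E such that every absolutely continuous curve γ : [0,T] → E with γ(0) ∈ K and ∫₀ᵀ L(γ(s), γ̇(s)) ds ≤ M satisfies γ(t) ∈ K' for all 0 ≤ t ≤ T. -/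
open Filter Set
open scoped ENNReal

noncomputable section

open MeasureTheory

section ChainRule
open MeasureTheory


open intervalIntegral in
lemma chain_rule_aux {d : ℕ} (Υ : Euc d → ℝ) (f : Euc d → Euc d)
    (hf : Continuous f) (hgrad : ∀ x, HasGradientAt Υ (f x) x)
    {a b : ℝ} (hab : a ≤ b) {g : ℝ → Euc d} (hg : IntegrableOn g (Icc a b))
    (x₀ : Euc d) :
    Υ (x₀ + ∫ s in a..b, g s) =
      Υ x₀ + ∫ s in a..b, (inner ℝ (f (x₀ + ∫ u in a..s, g u)) (g s) : ℝ) := by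
  set Γ : ℝ → Euc d := fun t => x₀ + ∫ s in a..t, g s with hΓdef
  have hΥc : Continuous Υ :=
    Differentiable.continuous (fun x => (hgrad x).differentiableAt)
  -- continuity of Γ on Icc a b
  have hΓcont : ContinuousOn Γ (Icc a b) := by
    have h1 : ContinuousOn (fun t => ∫ s in Ioc a t, g s) (Icc a b) :=
      intervalIntegral.continuousOn_primitive hg
    have h2 : ContinuousOn (fun t => x₀ + ∫ s in Ioc a t, g s) (Icc a b) :=
      continuousOn_const.add h1
    apply h2.congr
    intro t ht
    simp only [hΓdef, intervalIntegral.integral_of_le ht.1]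
  set S : Set (Euc d) := Γ '' (Icc a b) with hSdef
  have hScomp : IsCompact S := isCompact_Icc.image_of_continuousOn hΓcont
  set Q : Set (Euc d) := Metric.cthickening 1 S with hQdef
  have hQcomp : IsCompact Q := hScomp.cthickening
  have hSQ : S ⊆ Q := Metric.self_subset_cthickening S
  have hΓS : ∀ t ∈ Icc a b, Γ t ∈ S := fun t ht => Set.mem_image_of_mem Γ ht
  obtain ⟨B, hB⟩ := hQcomp.exists_bound_of_continuousOn hf.continuousOn
  have hB0 : 0 ≤ B :=
    le_trans (norm_nonneg _) (hB (Γ a) (hSQ (hΓS a ⟨le_refl a, hab⟩)))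
  set NG : ℝ := ∫ s in Icc a b, ‖g s‖ with hNGdef
  have hNG0 : 0 ≤ NG := integral_nonneg fun s => norm_nonneg _
  -- the integrand s ↦ ⟪f (Γ s), g s⟫ is integrable on Icc a b
  have hintgr : IntegrableOn (fun s => (inner ℝ (f (Γ s)) (g s) : ℝ)) (Icc a b) := by
    apply Integrable.mono' (hg.norm.const_mul B)
    · exact AEStronglyMeasurable.inner
        (((hf.comp_continuousOn hΓcont).aestronglyMeasurable measurableSet_Icc))
        hg.aestronglyMeasurable
    · filter_upwards [ae_restrict_mem measurableSet_Icc] with s hs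
      calc ‖(inner ℝ (f (Γ s)) (g s) : ℝ)‖ ≤ ‖f (Γ s)‖ * ‖g s‖ := by
            rw [Real.norm_eq_abs]; exact abs_real_inner_le_norm _ _
        _ ≤ B * ‖g s‖ := by
            exact mul_le_mul_of_nonneg_right (hB _ (hSQ (hΓS s hs))) (norm_nonneg _)
  set I : ℝ := ∫ s in a..b, (inner ℝ (f (Γ s)) (g s) : ℝ) with hIdef
  have key : ∀ ε > 0, |Υ (Γ b) - (Υ x₀ + I)| ≤ ε := by
    intro ε hε
    -- uniform continuity of f on Q
    have hUC := hQcomp.uniformContinuousOn_of_continuous hf.continuousOn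
    rw [Metric.uniformContinuousOn_iff_le] at hUC
    set ε₁ : ℝ := ε / (3 * (NG + 1)) with hε₁def
    have hε₁ : 0 < ε₁ := by positivity
    obtain ⟨δ, hδpos, hδ⟩ := hUC ε₁ hε₁
    obtain ⟨δ₀, hδ₀pos, hδ₀⟩ := Metric.continuous_iff.1 hΥc (Γ b) (ε/3) (by linarith)
    set η : ℝ := min 1 (min δ (min (δ₀/2) (ε/(3*(B+1))))) with hηdef
    have hηpos : 0 < η :=
      lt_min one_pos (lt_min hδpos (lt_min (by linarith) (by positivity)))
    have hη1 : η ≤ 1 := min_le_left _ _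
    have hηδ : η ≤ δ := le_trans (min_le_right _ _) (min_le_left _ _)
    have hηδ₀ : η ≤ δ₀/2 :=
      le_trans (min_le_right _ _) (le_trans (min_le_right _ _) (min_le_left _ _))
    have hηε : η ≤ ε/(3*(B+1)) :=
      le_trans (min_le_right _ _) (le_trans (min_le_right _ _) (min_le_right _ _))
    set G : ℝ → Euc d := (Icc a b).indicator g with hGdef
    have hGint : Integrable G volume := (integrable_indicator_iff measurableSet_Icc).2 hg
    obtain ⟨g', hg'supp, hg'close, hg'cont, hg'int⟩ :=
      hGint.exists_hasCompactSupport_integral_sub_le hηpos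
    set Γ' : ℝ → Euc d := fun t => x₀ + ∫ s in a..t, g' s with hΓ'def
    have hΓ'a : Γ' a = x₀ := by simp [hΓ'def]
    have hΓ'deriv : ∀ t, HasDerivAt Γ' (g' t) t := fun t =>
      ((hg'cont.integral_hasStrictDerivAt a t).hasDerivAt).const_add x₀
    have hΓ'cont : Continuous Γ' :=
      continuous_iff_continuousAt.2 fun t => (hΓ'deriv t).continuousAt
    have hGeq : ∀ t ∈ Icc a b, EqOn g G (uIcc a t) := by
      intro t ht s hs
      rw [uIcc_of_le ht.1] at hs
      rw [hGdef, Set.indicator_of_mem (Icc_subset_Icc le_rfl ht.2 hs) g]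
    have hnormGg' : (∫ s, ‖g' s - G s‖) ≤ η := by
      calc (∫ s, ‖g' s - G s‖) = ∫ s, ‖G s - g' s‖ := by simp only [norm_sub_rev]
        _ ≤ η := hg'close
    have hdiff : ∀ t ∈ Icc a b, ‖Γ' t - Γ t‖ ≤ η := by
      intro t ht
      have h1 : (∫ s in a..t, g s) = ∫ s in a..t, G s :=
        intervalIntegral.integral_congr (hGeq t ht)
      have h2 : Γ' t - Γ t = ∫ s in a..t, (g' s - G s) := by
        rw [intervalIntegral.integral_sub (hg'cont.intervalIntegrable a t)
          (hGint.intervalIntegrable)]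
        simp only [hΓ'def, hΓdef, h1]
        abel
      rw [h2]
      calc ‖∫ s in a..t, (g' s - G s)‖ ≤ ∫ s in a..t, ‖g' s - G s‖ :=
            intervalIntegral.norm_integral_le_integral_norm ht.1
        _ = ∫ s in Ioc a t, ‖g' s - G s‖ := intervalIntegral.integral_of_le ht.1
        _ ≤ ∫ s, ‖g' s - G s‖ :=
            setIntegral_le_integral ((hg'int.sub hGint).norm)
              (Eventually.of_forall fun s => norm_nonneg _)
        _ ≤ η := hnormGg'
    have hΓ'Q : ∀ t ∈ Icc a b, Γ' t ∈ Q := fun t ht =>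
      Metric.mem_cthickening_of_dist_le (Γ' t) (Γ t) 1 S (hΓS t ht)
        (by rw [dist_eq_norm]; exact (hdiff t ht).trans hη1)
    have hcont' : Continuous fun s => (inner ℝ (f (Γ' s)) (g' s) : ℝ) :=
      (hf.comp hΓ'cont).inner hg'cont
    have hψ : ∀ t ∈ uIcc a b,
        HasDerivAt (fun u => Υ (Γ' u)) (inner ℝ (f (Γ' t)) (g' t) : ℝ) t := by
      intro t _
      have h := ((hgrad (Γ' t)).hasFDerivAt).comp_hasDerivAt t (hΓ'deriv t)
      simp only [InnerProductSpace.toDual_apply_apply] at h; exact h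
    have hFTC : (∫ s in a..b, (inner ℝ (f (Γ' s)) (g' s) : ℝ)) = Υ (Γ' b) - Υ (Γ' a) :=
      intervalIntegral.integral_eq_sub_of_hasDerivAt hψ (hcont'.intervalIntegrable a b)
    -- error estimate between the two integrals
    have hIoc : IntegrableOn (fun s => (inner ℝ (f (Γ s)) (g s) : ℝ)) (Ioc a b) :=
      hintgr.mono_set Ioc_subset_Icc_self
    have hIoc' : IntegrableOn (fun s => (inner ℝ (f (Γ' s)) (g' s) : ℝ)) (Ioc a b) :=
      hcont'.integrableOn_Ioc
    have hbound1 : (∫ s in Ioc a b, ‖g' s - g s‖) ≤ η := by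
      have heq : ∀ s ∈ Ioc a b, ‖g' s - g s‖ = ‖g' s - G s‖ := by
        intro s hs
        rw [hGdef, Set.indicator_of_mem (Ioc_subset_Icc_self hs) g]
      calc (∫ s in Ioc a b, ‖g' s - g s‖) = ∫ s in Ioc a b, ‖g' s - G s‖ :=
            setIntegral_congr_fun measurableSet_Ioc heq
        _ ≤ ∫ s, ‖g' s - G s‖ :=
            setIntegral_le_integral ((hg'int.sub hGint).norm)
              (Eventually.of_forall fun s => norm_nonneg _)
        _ ≤ η := hnormGg'
    have hbound2 : (∫ s in Ioc a b, ‖g s‖) ≤ NG :=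
      setIntegral_mono_set hg.norm (Eventually.of_forall fun s => norm_nonneg _)
        (HasSubset.Subset.eventuallyLE Ioc_subset_Icc_self)
    have hg'gint : IntegrableOn (fun s => ‖g' s - g s‖) (Ioc a b) :=
      (hg'cont.integrableOn_Ioc.sub (hg.mono_set Ioc_subset_Icc_self)).norm
    have hgnormIoc : IntegrableOn (fun s => ‖g s‖) (Ioc a b) :=
      (hg.mono_set Ioc_subset_Icc_self).norm
    have hI'I : |(∫ s in a..b, (inner ℝ (f (Γ' s)) (g' s) : ℝ)) - I| ≤ ε/3 + ε/3 := by
      rw [hIdef, intervalIntegral.integral_of_le hab, intervalIntegral.integral_of_le hab,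
        ← integral_sub hIoc' hIoc]
      have hrhsint : IntegrableOn (fun s => B * ‖g' s - g s‖ + ε₁ * ‖g s‖) (Ioc a b) :=
        (hg'gint.const_mul B).add (hgnormIoc.const_mul ε₁)
      calc |∫ s in Ioc a b,
            ((inner ℝ (f (Γ' s)) (g' s) : ℝ) - (inner ℝ (f (Γ s)) (g s) : ℝ))|
          ≤ ∫ s in Ioc a b,
            ‖(inner ℝ (f (Γ' s)) (g' s) : ℝ) - (inner ℝ (f (Γ s)) (g s) : ℝ)‖ := by
            rw [← Real.norm_eq_abs]; exact norm_integral_le_integral_norm _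
        _ ≤ ∫ s in Ioc a b, (B * ‖g' s - g s‖ + ε₁ * ‖g s‖) := by
            apply setIntegral_mono_on ((hIoc'.sub hIoc).norm) hrhsint measurableSet_Ioc
            intro s hs
            have hsIcc := Ioc_subset_Icc_self hs
            simp only [Pi.sub_apply]
            have e1 : (inner ℝ (f (Γ' s)) (g' s) : ℝ) - (inner ℝ (f (Γ s)) (g s) : ℝ)
                = (inner ℝ (f (Γ' s)) (g' s - g s) : ℝ)
                  + (inner ℝ (f (Γ' s) - f (Γ s)) (g s) : ℝ) := by
              rw [inner_sub_right, inner_sub_left]; ring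
            rw [e1]
            have hfQ : ‖f (Γ' s)‖ ≤ B := hB _ (hΓ'Q s hsIcc)
            have hff : ‖f (Γ' s) - f (Γ s)‖ ≤ ε₁ := by
              rw [← dist_eq_norm]
              exact hδ _ (hΓ'Q s hsIcc) _ (hSQ (hΓS s hsIcc))
                (by rw [dist_eq_norm]; exact (hdiff s hsIcc).trans hηδ)
            calc ‖(inner ℝ (f (Γ' s)) (g' s - g s) : ℝ)
                  + (inner ℝ (f (Γ' s) - f (Γ s)) (g s) : ℝ)‖
                ≤ ‖(inner ℝ (f (Γ' s)) (g' s - g s) : ℝ)‖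
                  + ‖(inner ℝ (f (Γ' s) - f (Γ s)) (g s) : ℝ)‖ := norm_add_le _ _
              _ ≤ B * ‖g' s - g s‖ + ε₁ * ‖g s‖ := by
                  apply add_le_add
                  · calc ‖(inner ℝ (f (Γ' s)) (g' s - g s) : ℝ)‖
                        ≤ ‖f (Γ' s)‖ * ‖g' s - g s‖ := by
                          rw [Real.norm_eq_abs]; exact abs_real_inner_le_norm _ _
                      _ ≤ B * ‖g' s - g s‖ :=
                          mul_le_mul_of_nonneg_right hfQ (norm_nonneg _)
                  · calc ‖(inner ℝ (f (Γ' s) - f (Γ s)) (g s) : ℝ)‖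
                        ≤ ‖f (Γ' s) - f (Γ s)‖ * ‖g s‖ := by
                          rw [Real.norm_eq_abs]; exact abs_real_inner_le_norm _ _
                      _ ≤ ε₁ * ‖g s‖ :=
                          mul_le_mul_of_nonneg_right hff (norm_nonneg _)
        _ = B * (∫ s in Ioc a b, ‖g' s - g s‖) + ε₁ * (∫ s in Ioc a b, ‖g s‖) := by
            rw [integral_add (hg'gint.const_mul B) (hgnormIoc.const_mul ε₁),
              MeasureTheory.integral_const_mul, MeasureTheory.integral_const_mul]
        _ ≤ B * η + ε₁ * NG :=
            add_le_add (mul_le_mul_of_nonneg_left hbound1 hB0)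
              (mul_le_mul_of_nonneg_left hbound2 hε₁.le)
        _ ≤ ε/3 + ε/3 := by
            apply add_le_add
            · calc B * η ≤ B * (ε/(3*(B+1))) := mul_le_mul_of_nonneg_left hηε hB0
                _ ≤ (B+1) * (ε/(3*(B+1))) :=
                    mul_le_mul_of_nonneg_right (by linarith) (by positivity)
                _ = ε/3 := by field_simp
            · calc ε₁ * NG ≤ ε₁ * (NG+1) :=
                  mul_le_mul_of_nonneg_left (by linarith) hε₁.le
                _ = ε/3 := by rw [hε₁def]; field_simp
    have h1 : |Υ (Γ b) - Υ (Γ' b)| ≤ ε/3 := by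
      have hd : dist (Γ' b) (Γ b) < δ₀ := by
        rw [dist_eq_norm]
        exact lt_of_le_of_lt (hdiff b ⟨hab, le_refl b⟩) (lt_of_le_of_lt hηδ₀ (by linarith))
      have h2 := hδ₀ (Γ' b) hd
      rw [Real.dist_eq] at h2
      rw [abs_sub_comm]
      exact h2.le
    have hsplit : Υ (Γ b) - (Υ x₀ + I)
        = (Υ (Γ b) - Υ (Γ' b)) + ((∫ s in a..b, (inner ℝ (f (Γ' s)) (g' s) : ℝ)) - I) := by
      rw [hFTC, hΓ'a]; ring
    rw [hsplit]
    calc |(Υ (Γ b) - Υ (Γ' b)) + ((∫ s in a..b, (inner ℝ (f (Γ' s)) (g' s) : ℝ)) - I)|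
        ≤ |Υ (Γ b) - Υ (Γ' b)|
          + |(∫ s in a..b, (inner ℝ (f (Γ' s)) (g' s) : ℝ)) - I| := abs_add_le _ _
      _ ≤ ε/3 + (ε/3 + ε/3) := add_le_add h1 hI'I
      _ = ε := by ring
  by_contra hne
  have habs : 0 < |Υ (Γ b) - (Υ x₀ + I)| := by
    rcases (abs_pos).2 (sub_ne_zero.2 hne) with h
    exact h
  have := key (|Υ (Γ b) - (Υ x₀ + I)| / 2) (by linarith)
  linarith

end ChainRule

/-- Compact containment of trajectories with bounded Lagrangian cost
(Proposition 4.15(b)): for every compact `K ⊆ E`, `T > 0` and `M ≥ 0` there is a compact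
`K' ⊆ E` such that every absolutely continuous curve `γ : [0,T] → E` with `γ(0) ∈ K`
and `∫₀ᵀ L(γ(s),γ̇(s)) ds ≤ M` stays in `K'`. -/
theorem compact_containment_of_bounded_cost {d k l : ℕ}
    (xs vs : Fin k → Euc d) (ys ws : Fin l → Euc d)
    (hpoly : IsPolyhedron xs vs ys ws)
    (H : Finset (Fin k) → Euc d → Euc d → ℝ)
    (DpH : Finset (Fin k) → Euc d → Euc d → Euc d)
    (hgen : IsGenerating xs vs ys ws H DpH)
    (Υ : Euc d → ℝ) (hΥ : GoodContainment xs vs ys ws H Υ) :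
    ∀ K ⊆ polyE xs vs ys ws, IsCompact K → ∀ T : ℝ, 0 < T → ∀ M : ℝ, 0 ≤ M →
      ∃ K' : Set (Euc d), IsCompact K' ∧ K' ⊆ polyE xs vs ys ws ∧
        ∀ γ g : ℝ → Euc d,
          (∀ t ∈ Icc (0:ℝ) T, γ t ∈ polyE xs vs ys ws) →
          γ 0 ∈ K →
          IntegrableOn g (Icc 0 T) volume →
          (∀ t ∈ Icc (0:ℝ) T, γ t = γ 0 + ∫ s in (0:ℝ)..t, g s) →
          (∫⁻ s in Icc (0:ℝ) T, Lag xs vs ys ws H (γ s) (g s)) ≤ ENNReal.ofReal M →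
          ∀ t ∈ Icc (0:ℝ) T, γ t ∈ K' := by
  intro K hKE hKcomp T hT M hM
  obtain ⟨hpos, ⟨z₀, hz₀E, hz₀⟩, hC2, hcompact, C, hC⟩ := hΥ
  have hΥc : Continuous Υ := hC2.continuous
  set f : Euc d → Euc d := fun x => gradient Υ x with hfdef
  have hfcont : Continuous f := by
    have h1 : Continuous (fderiv ℝ Υ) := hC2.continuous_fderiv two_ne_zero
    exact (LinearIsometryEquiv.continuous (InnerProductSpace.toDual ℝ (Euc d)).symm).comp h1
  have hgrad : ∀ x, HasGradientAt Υ (f x) x := fun x =>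
    ((hC2.differentiable two_ne_zero) x).hasGradientAt
  obtain ⟨R₀, hR₀⟩ := hKcomp.exists_bound_of_continuousOn hΥc.continuousOn
  set R : ℝ := max R₀ 0 with hRdef
  have hR0 : 0 ≤ R := le_max_right _ _
  set C' : ℝ := max C 0 with hC'def
  have hC'0 : 0 ≤ C' := le_max_right _ _
  set c : ℝ := R + C' * T + M with hcdef
  have hc0 : 0 ≤ c := by positivity
  refine ⟨{x ∈ polyE xs vs ys ws | Υ x ≤ c}, hcompact c hc0, fun x hx => hx.1, ?_⟩
  intro γ g hγE hγ0 hgint hγeq hcost t ht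
  refine ⟨hγE t ht, ?_⟩
  -- continuity of γ on [0,T]
  have hγcont : ContinuousOn γ (Icc 0 T) := by
    have h1 : ContinuousOn (fun s => γ 0 + ∫ u in Ioc 0 s, g u) (Icc 0 T) :=
      continuousOn_const.add (intervalIntegral.continuousOn_primitive hgint)
    apply h1.congr
    intro s hs
    rw [hγeq s hs, intervalIntegral.integral_of_le hs.1]
  have hfγ : ContinuousOn (fun s => f (γ s)) (Icc 0 T) := hfcont.comp_continuousOn hγcont
  -- the auxiliary nonnegative integrand m
  set m : ℝ → ℝ := fun s => max ((inner ℝ (f (γ s)) (g s) : ℝ) - C) 0 with hmdef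
  have hmnonneg : ∀ s, 0 ≤ m s := fun s => le_max_right _ _
  have hinnerAESM : AEStronglyMeasurable (fun s => (inner ℝ (f (γ s)) (g s) : ℝ))
      (volume.restrict (Icc (0:ℝ) T)) :=
    AEStronglyMeasurable.inner (hfγ.aestronglyMeasurable measurableSet_Icc)
      hgint.aestronglyMeasurable
  have hmAESM : AEStronglyMeasurable m (volume.restrict (Icc (0:ℝ) T)) :=
    (((hinnerAESM.aemeasurable.sub aemeasurable_const).max aemeasurable_const).aestronglyMeasurable)
  -- pointwise comparison with the Lagrangian
  have hptwise : ∀ s ∈ Icc (0:ℝ) T,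
      ENNReal.ofReal (m s) ≤ Lag xs vs ys ws H (γ s) (g s) := by
    intro s hs
    have hHdag : Hdag xs vs ys ws H (γ s) (f (γ s)) ≤ C := by
      apply csSup_le
      · exact ⟨H ∅ (γ s) (f (γ s)), ∅,
          ⟨hγE s hs, fun i hi => absurd hi (Finset.notMem_empty i)⟩, rfl⟩
      · rintro r ⟨J, hJ, rfl⟩
        exact hC J _ hJ
    have h1 : ENNReal.ofReal (m s) ≤
        ENNReal.ofReal ((inner ℝ (f (γ s)) (g s) : ℝ) - Hdag xs vs ys ws H (γ s) (f (γ s))) := by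
      rcases le_total ((inner ℝ (f (γ s)) (g s) : ℝ) - C) 0 with h | h
      · rw [hmdef]; simp only [max_eq_right h]
        simp
      · rw [hmdef]; simp only [max_eq_left h]
        exact ENNReal.ofReal_le_ofReal (by linarith)
    exact h1.trans (le_iSup (fun p => ENNReal.ofReal
      ((inner ℝ p (g s) : ℝ) - Hdag xs vs ys ws H (γ s) p)) (f (γ s)))
  have hlint : (∫⁻ s in Icc (0:ℝ) T, ENNReal.ofReal (m s)) ≤ ENNReal.ofReal M := by
    refine le_trans (MeasureTheory.lintegral_mono_ae ?_) hcost
    filter_upwards [MeasureTheory.ae_restrict_mem measurableSet_Icc] with s hs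
    exact hptwise s hs
  have hmint : IntegrableOn m (Icc (0:ℝ) T) := by
    refine ⟨hmAESM, ?_⟩
    rw [MeasureTheory.hasFiniteIntegral_iff_ofReal
      (Eventually.of_forall hmnonneg)]
    exact lt_of_le_of_lt hlint ENNReal.ofReal_lt_top
  have hintm_le : (∫ s in Icc (0:ℝ) T, m s) ≤ M := by
    rw [MeasureTheory.integral_eq_lintegral_of_nonneg_ae
      (Eventually.of_forall hmnonneg) hmAESM]
    calc (∫⁻ s in Icc (0:ℝ) T, ENNReal.ofReal (m s)).toReal
        ≤ (ENNReal.ofReal M).toReal := ENNReal.toReal_mono ENNReal.ofReal_ne_top hlint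
      _ = M := ENNReal.toReal_ofReal hM
  -- chain rule on [0, t]
  have hsub : Icc (0:ℝ) t ⊆ Icc (0:ℝ) T := Icc_subset_Icc le_rfl ht.2
  have hgt : IntegrableOn g (Icc (0:ℝ) t) := hgint.mono_set hsub
  have hγt : Υ (γ t) = Υ (γ 0) + ∫ s in (0:ℝ)..t, (inner ℝ (f (γ s)) (g s) : ℝ) := by
    have hcr := chain_rule_aux Υ f hfcont hgrad ht.1 hgt (γ 0)
    rw [hγeq t ht, hcr]
    congr 1
    apply intervalIntegral.integral_congr
    intro s hs
    rw [uIcc_of_le ht.1] at hs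
    simp only [← hγeq s (hsub hs)]
  -- integrability of the inner product term on [0,T]
  obtain ⟨B, hB⟩ := isCompact_Icc.exists_bound_of_continuousOn hfγ
  have hinner_int : IntegrableOn (fun s => (inner ℝ (f (γ s)) (g s) : ℝ)) (Icc (0:ℝ) T) := by
    apply MeasureTheory.Integrable.mono' (hgint.norm.const_mul B) hinnerAESM
    filter_upwards [MeasureTheory.ae_restrict_mem measurableSet_Icc] with s hs
    calc ‖(inner ℝ (f (γ s)) (g s) : ℝ)‖ ≤ ‖f (γ s)‖ * ‖g s‖ := by
          rw [Real.norm_eq_abs]; exact abs_real_inner_le_norm _ _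
      _ ≤ B * ‖g s‖ := mul_le_mul_of_nonneg_right (hB s hs) (norm_nonneg _)
  have hII1 : IntervalIntegrable (fun s => (inner ℝ (f (γ s)) (g s) : ℝ)) volume 0 t := by
    rw [intervalIntegrable_iff_integrableOn_Icc_of_le ht.1]
    exact hinner_int.mono_set hsub
  have hII2 : IntervalIntegrable (fun s => C' + m s) volume 0 t := by
    apply IntervalIntegrable.add intervalIntegrable_const
    rw [intervalIntegrable_iff_integrableOn_Icc_of_le ht.1]
    exact hmint.mono_set hsub
  have hmono : (∫ s in (0:ℝ)..t, (inner ℝ (f (γ s)) (g s) : ℝ))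
      ≤ ∫ s in (0:ℝ)..t, (C' + m s) := by
    apply intervalIntegral.integral_mono_on ht.1 hII1 hII2
    intro s _
    rcases le_total ((inner ℝ (f (γ s)) (g s) : ℝ) - C) 0 with h | h
    · have : (inner ℝ (f (γ s)) (g s) : ℝ) ≤ C := by linarith
      calc (inner ℝ (f (γ s)) (g s) : ℝ) ≤ C := this
        _ ≤ C' := le_max_left _ _
        _ ≤ C' + m s := le_add_of_nonneg_right (hmnonneg s)
    · have h1 : m s = (inner ℝ (f (γ s)) (g s) : ℝ) - C := max_eq_left h
      have h2 : C ≤ C' := le_max_left _ _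
      linarith
  have hsplit : (∫ s in (0:ℝ)..t, (C' + m s)) = C' * t + ∫ s in (0:ℝ)..t, m s := by
    rw [intervalIntegral.integral_add intervalIntegrable_const
      (by rw [intervalIntegrable_iff_integrableOn_Icc_of_le ht.1]; exact hmint.mono_set hsub),
      intervalIntegral.integral_const]
    simp [mul_comm]
  have hmle : (∫ s in (0:ℝ)..t, m s) ≤ M := by
    rw [intervalIntegral.integral_of_le ht.1]
    calc (∫ s in Ioc (0:ℝ) t, m s) ≤ ∫ s in Icc (0:ℝ) T, m s :=
          MeasureTheory.setIntegral_mono_set hmint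
            (Eventually.of_forall hmnonneg)
            (HasSubset.Subset.eventuallyLE ((Ioc_subset_Icc_self).trans hsub))
      _ ≤ M := hintm_le
  have hΥ0 : Υ (γ 0) ≤ R := by
    calc Υ (γ 0) ≤ |Υ (γ 0)| := le_abs_self _
      _ = ‖Υ (γ 0)‖ := (Real.norm_eq_abs _).symm
      _ ≤ R₀ := hR₀ (γ 0) hγ0
      _ ≤ R := le_max_left _ _
  calc Υ (γ t) = Υ (γ 0) + ∫ s in (0:ℝ)..t, (inner ℝ (f (γ s)) (g s) : ℝ) := hγt
    _ ≤ Υ (γ 0) + ∫ s in (0:ℝ)..t, (C' + m s) := by linarith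
    _ = Υ (γ 0) + (C' * t + ∫ s in (0:ℝ)..t, m s) := by rw [hsplit]
    _ ≤ R + (C' * T + M) := by
        have h1 : C' * t ≤ C' * T := mul_le_mul_of_nonneg_left ht.2 hC'0
        have h2 := hmle
        linarith
    _ = c := by rw [hcdef]; ring
end
end

section
/- Sublinear modulus for gradients against the Lagrangian (Proposition 4.15(c)): Let E be a d-dimensional convex polyhedron, {H_J} a generating set of Hamiltonians admitting a good containment function Υ, and L(x,v) = sup_{p∈ℝ^d}(⟨p,v⟩ − H_†(x,p)). Then for every bounded twice continuously differentiable f : E → ℝ and every compact K ⊆ E there exists a right-continuous nondecreasing function ψ_{f,K} : [0,∞) → [0,∞) with lim_{r→∞} ψ_{f,K}(r)/r = 0 such that |⟨∇f(x), v⟩| ≤ ψ_{f,K}(L(x,v)) for all x ∈ K and all v ∈ ℝ^d. -/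
open Filter Set
open scoped ENNReal

noncomputable section

/-- Sublinear modulus for gradients against the Lagrangian (Proposition 4.15(c)):
for every bounded `C²` function `f` and every compact `K ⊆ E` there is a
right-continuous nondecreasing `ψ : [0,∞) → [0,∞)` with `ψ(r)/r → 0` such that
`|⟨∇f(x),v⟩| ≤ ψ(L(x,v))` for all `x ∈ K`, `v ∈ ℝ^d` (encoded as: the bound `ψ r`
holds whenever `r` is a real upper bound for `L(x,v)`, the inequality being vacuous
when `L(x,v) = ∞`). -/
theorem sublinear_modulus_for_gradients {d k l : ℕ}
    (xs vs : Fin k → Euc d) (ys ws : Fin l → Euc d)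
    (hpoly : IsPolyhedron xs vs ys ws)
    (H : Finset (Fin k) → Euc d → Euc d → ℝ)
    (DpH : Finset (Fin k) → Euc d → Euc d → Euc d)
    (hgen : IsGenerating xs vs ys ws H DpH)
    (Υ : Euc d → ℝ) (hΥ : GoodContainment xs vs ys ws H Υ)
    (f : Euc d → ℝ) (hf : ContDiff ℝ 2 f) (hfb : ∃ C, ∀ x, |f x| ≤ C)
    (K : Set (Euc d)) (hKE : K ⊆ polyE xs vs ys ws) (hK : IsCompact K) :
    ∃ ψ : ℝ → ℝ, (∀ r : ℝ, 0 ≤ r → 0 ≤ ψ r) ∧ MonotoneOn ψ (Ici 0) ∧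
      (∀ r : ℝ, 0 ≤ r → ContinuousWithinAt ψ (Ici r) r) ∧
      Tendsto (fun r => ψ r / r) atTop (nhds 0) ∧
      ∀ x ∈ K, ∀ w : Euc d, ∀ r : ℝ, 0 ≤ r →
        Lag xs vs ys ws H x w ≤ ENNReal.ofReal r →
        |(inner ℝ (gradient f x) w : ℝ)| ≤ ψ r := by
  classical
  -- continuity of the gradient of f
  have hgrad_cont : Continuous fun x : Euc d => gradient f x := by
    have h1 : Continuous fun x => fderiv ℝ f x := hf.continuous_fderiv (by norm_num)
    exact (InnerProductSpace.toDual ℝ (Euc d)).symm.continuous.comp h1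
  obtain ⟨G0, hG0⟩ : ∃ G0, ∀ x ∈ K, ‖gradient f x‖ ≤ G0 := by
    rcases (hK.image (continuous_norm.comp hgrad_cont)).bddAbove with ⟨G0, hG0⟩
    exact ⟨G0, fun x hx => hG0 ⟨x, hx, rfl⟩⟩
  set G : ℝ := max G0 0 + 1 with hGdef
  have hGpos : 0 < G := by
    have := le_max_right G0 0; simp only [hGdef]; linarith
  have hGg : ∀ x ∈ K, ‖gradient f x‖ ≤ G := by
    intro x hx
    have h1 := hG0 x hx
    have h2 := le_max_left G0 0
    simp only [hGdef]; linarith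
  -- bound for Hdag on K × ball of radius n
  have hMex : ∀ n : ℕ, ∃ M : ℝ, 0 ≤ M ∧ ∀ x ∈ K, ∀ p : Euc d, ‖p‖ ≤ (n : ℝ) →
      Hdag xs vs ys ws H x p ≤ M := by
    intro n
    have hJ : ∀ J : Finset (Fin k), ∃ C : ℝ, ∀ x ∈ K, x ∈ polyEJ xs vs ys ws J →
        ∀ p : Euc d, ‖p‖ ≤ (n : ℝ) → H J x p ≤ C := by
      intro J
      have hclosed : IsClosed {z : Euc d | ∀ i ∈ J, (inner ℝ (z - xs i) (vs i) : ℝ) = 0} := by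
        have heq : {z : Euc d | ∀ i ∈ J, (inner ℝ (z - xs i) (vs i) : ℝ) = 0}
            = ⋂ i ∈ J, {z : Euc d | (inner ℝ (z - xs i) (vs i) : ℝ) = 0} := by
          ext z; simp
        rw [heq]
        refine isClosed_biInter fun i _ => isClosed_eq ?_ continuous_const
        exact Continuous.inner (continuous_id.sub continuous_const) continuous_const
      have hTc : IsCompact ((K ∩ {z : Euc d | ∀ i ∈ J, (inner ℝ (z - xs i) (vs i) : ℝ) = 0}) ×ˢ
          Metric.closedBall (0 : Euc d) (n : ℝ)) :=
        (hK.inter_right hclosed).prod (isCompact_closedBall _ _)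
      have hTsub : ((K ∩ {z : Euc d | ∀ i ∈ J, (inner ℝ (z - xs i) (vs i) : ℝ) = 0}) ×ˢ
          Metric.closedBall (0 : Euc d) (n : ℝ)) ⊆ polyEJ xs vs ys ws J ×ˢ univ := by
        rintro ⟨x, p⟩ ⟨⟨hxK, hxe⟩, -⟩
        exact ⟨⟨hKE hxK, hxe⟩, mem_univ _⟩
      have hcont : ContinuousOn (fun q : Euc d × Euc d => H J q.1 q.2)
          ((K ∩ {z : Euc d | ∀ i ∈ J, (inner ℝ (z - xs i) (vs i) : ℝ) = 0}) ×ˢ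
            Metric.closedBall (0 : Euc d) (n : ℝ)) :=
        ((hgen J).2.1.continuousOn).mono hTsub
      rcases (hTc.bddAbove_image hcont) with ⟨C, hC⟩
      refine ⟨C, fun x hxK hxE p hp => ?_⟩
      exact hC ⟨⟨x, p⟩, ⟨⟨hxK, hxE.2⟩, by
        simpa [Metric.mem_closedBall, dist_eq_norm] using hp⟩, rfl⟩
    choose C hC using hJ
    refine ⟨∑ J : Finset (Fin k), |C J|, Finset.sum_nonneg fun J _ => abs_nonneg _, ?_⟩
    intro x hx p hp
    apply Real.sSup_le
    · rintro r ⟨J, hxJ, rfl⟩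
      calc H J x p ≤ C J := hC J x hx hxJ p hp
        _ ≤ |C J| := le_abs_self _
        _ ≤ _ := Finset.single_le_sum (f := fun J => |C J|) (fun i _ => abs_nonneg _) (Finset.mem_univ J)
    · exact Finset.sum_nonneg fun J _ => abs_nonneg _
  choose M hM0 hMb using hMex
  -- the modulus
  set ψ : ℝ → ℝ := fun r => ⨅ n : ℕ, G / ((n : ℝ) + 1) * (max r 0 + M (n + 1)) with hψdef
  have hψeq : ∀ r : ℝ, ψ r = ⨅ n : ℕ, G / ((n : ℝ) + 1) * (max r 0 + M (n + 1)) := by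
    intro r; simp only [hψdef]
  have hterm_nonneg : ∀ r : ℝ, ∀ n : ℕ, 0 ≤ G / ((n : ℝ) + 1) * (max r 0 + M (n + 1)) := by
    intro r n
    exact mul_nonneg (div_nonneg hGpos.le (by positivity))
      (add_nonneg (le_max_right r 0) (hM0 _))
  have hbdd : ∀ r : ℝ,
      BddBelow (Set.range fun n : ℕ => G / ((n : ℝ) + 1) * (max r 0 + M (n + 1))) := by
    intro r
    exact ⟨0, by rintro y ⟨n, rfl⟩; exact hterm_nonneg r n⟩
  have hψ_le : ∀ r : ℝ, ∀ n : ℕ, ψ r ≤ G / ((n : ℝ) + 1) * (max r 0 + M (n + 1)) := by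
    intro r n
    rw [hψeq]
    exact ciInf_le (hbdd r) n
  have hψ_nonneg : ∀ r : ℝ, 0 ≤ ψ r := by
    intro r
    rw [hψeq]
    exact le_ciInf (hterm_nonneg r)
  have hdiv_nonneg : ∀ n : ℕ, (0:ℝ) ≤ G / ((n : ℝ) + 1) := by
    intro n; exact div_nonneg hGpos.le (by positivity)
  have hdiv_le : ∀ n : ℕ, G / ((n : ℝ) + 1) ≤ G := by
    intro n
    apply div_le_self hGpos.le
    have : (0:ℝ) ≤ (n : ℝ) := Nat.cast_nonneg n
    linarith
  have hLip : ∀ r s : ℝ, ψ r ≤ ψ s + G * |r - s| := by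
    intro r s
    have key : ∀ n : ℕ, ψ r - G * |r - s| ≤ G / ((n : ℝ) + 1) * (max s 0 + M (n + 1)) := by
      intro n
      have h1 : max r 0 - max s 0 ≤ |r - s| :=
        (le_abs_self _).trans (abs_max_sub_max_le_abs r s 0)
      have h3 : G / ((n : ℝ) + 1) * (max r 0 - max s 0) ≤ G * |r - s| :=
        le_trans (mul_le_mul_of_nonneg_left h1 (hdiv_nonneg n))
          (mul_le_mul_of_nonneg_right (hdiv_le n) (abs_nonneg _))
      have h4 := hψ_le r n
      nlinarith [h4, h3]
    have h5 := le_ciInf key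
    rw [← hψeq s] at h5
    linarith
  have hcont : Continuous ψ := by
    have hlw : LipschitzWith (Real.toNNReal G) ψ := by
      apply LipschitzWith.of_dist_le_mul
      intro r s
      rw [Real.dist_eq, Real.dist_eq, Real.coe_toNNReal _ hGpos.le, abs_sub_le_iff]
      constructor
      · have := hLip r s; linarith
      · have := hLip s r; rw [abs_sub_comm] at this; linarith
    exact hlw.continuous
  have hmono : MonotoneOn ψ (Ici 0) := by
    intro r _ s _ hrs
    rw [hψeq r, hψeq s]
    apply ciInf_mono (hbdd r)
    intro n
    exact mul_le_mul_of_nonneg_left (add_le_add_left (max_le_max hrs le_rfl) _)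
      (hdiv_nonneg n)
  have htend : Tendsto (fun r => ψ r / r) atTop (nhds 0) := by
    rw [Metric.tendsto_atTop]
    intro ε hε
    obtain ⟨n, hn⟩ := exists_nat_gt (2 * G / ε)
    refine ⟨max 1 (2 * G * M (n + 1) / ε), fun r hr => ?_⟩
    have hr1 : (1:ℝ) ≤ r := le_trans (le_max_left _ _) hr
    have hrpos : (0:ℝ) < r := lt_of_lt_of_le one_pos hr1
    have h2 : 2 * G * M (n + 1) / ε ≤ r := le_trans (le_max_right _ _) hr
    have hb : ψ r ≤ G / ((n : ℝ) + 1) * (r + M (n + 1)) := by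
      have h := hψ_le r n
      rwa [max_eq_left (le_trans zero_le_one hr1)] at h
    rw [Real.dist_0_eq_abs, abs_of_nonneg (div_nonneg (hψ_nonneg r) hrpos.le)]
    have hMM := hM0 (n + 1)
    -- G*M/r ≤ ε/2
    have e2 : G * M (n + 1) / r ≤ ε / 2 := by
      rw [div_le_div_iff₀ hrpos two_pos]
      rw [div_le_iff₀ hε] at h2
      nlinarith
    -- G/(n+1) < ε/2
    have e1 : G / ((n : ℝ) + 1) < ε / 2 := by
      rw [div_lt_iff₀ (by positivity : (0:ℝ) < (n : ℝ) + 1)]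
      rw [div_lt_iff₀ hε] at hn
      nlinarith
    have key : ψ r / r ≤ G / ((n : ℝ) + 1) + G * M (n + 1) / r := by
      rw [div_le_iff₀ hrpos]
      have hterm : G / ((n : ℝ) + 1) * M (n + 1) ≤ G * M (n + 1) :=
        mul_le_mul_of_nonneg_right (hdiv_le n) hMM
      have hlast : (G / ((n : ℝ) + 1) + G * M (n + 1) / r) * r
          = G / ((n : ℝ) + 1) * r + G * M (n + 1) := by
        field_simp
      calc ψ r ≤ G / ((n : ℝ) + 1) * (r + M (n + 1)) := hb
        _ = G / ((n : ℝ) + 1) * r + G / ((n : ℝ) + 1) * M (n + 1) := by ring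
        _ ≤ G / ((n : ℝ) + 1) * r + G * M (n + 1) := by linarith
        _ = (G / ((n : ℝ) + 1) + G * M (n + 1) / r) * r := hlast.symm
    linarith
  refine ⟨ψ, fun r _ => hψ_nonneg r, hmono, fun r _ => hcont.continuousWithinAt, htend, ?_⟩
  -- the main estimate
  intro x hx w r hr hL
  have hineq : ∀ p : Euc d, (inner ℝ p w : ℝ) - Hdag xs vs ys ws H x p ≤ r := by
    intro p
    have h1 : ENNReal.ofReal ((inner ℝ p w : ℝ) - Hdag xs vs ys ws H x p) ≤ ENNReal.ofReal r :=
      le_trans (le_iSup (fun p : Euc d =>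
        ENNReal.ofReal ((inner ℝ p w : ℝ) - Hdag xs vs ys ws H x p)) p) hL
    exact (ENNReal.ofReal_le_ofReal_iff hr).mp h1
  rw [hψeq]
  refine le_ciInf fun n => ?_
  set g : Euc d := gradient f x with hg
  have hnormg : ‖g‖ ≤ G := hGg x hx
  have hNG : (0:ℝ) < ((n : ℝ) + 1) / G := by positivity
  have hnorm : ∀ c : ℝ, |c| = ((n : ℝ) + 1) / G → ‖c • g‖ ≤ ((n + 1 : ℕ) : ℝ) := by
    intro c hc
    rw [norm_smul, Real.norm_eq_abs, hc]
    push_cast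
    calc ((n : ℝ) + 1) / G * ‖g‖ ≤ ((n : ℝ) + 1) / G * G :=
          mul_le_mul_of_nonneg_left hnormg hNG.le
      _ = (n : ℝ) + 1 := div_mul_cancel₀ _ hGpos.ne'
  have hb1 : Hdag xs vs ys ws H x ((((n : ℝ) + 1) / G) • g) ≤ M (n + 1) :=
    hMb (n + 1) x hx _ (hnorm _ (abs_of_nonneg hNG.le))
  have hb2 : Hdag xs vs ys ws H x ((-(((n : ℝ) + 1) / G)) • g) ≤ M (n + 1) :=
    hMb (n + 1) x hx _ (hnorm _ (by rw [abs_neg]; exact abs_of_nonneg hNG.le))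
  have hp1 := hineq ((((n : ℝ) + 1) / G) • g)
  have hp2 := hineq ((-(((n : ℝ) + 1) / G)) • g)
  rw [real_inner_smul_left] at hp1 hp2
  have hq1 : (((n : ℝ) + 1) / G) * (inner ℝ g w : ℝ) ≤ r + M (n + 1) := by linarith
  have hq2 : -((((n : ℝ) + 1) / G) * (inner ℝ g w : ℝ)) ≤ r + M (n + 1) := by
    rw [← neg_mul]; linarith
  have habs : |(inner ℝ g w : ℝ)| ≤ G / ((n : ℝ) + 1) * (r + M (n + 1)) := by
    have hGN : (0:ℝ) ≤ G / ((n : ℝ) + 1) := hdiv_nonneg n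
    rw [abs_le]
    constructor
    · have h := mul_le_mul_of_nonneg_left hq2 hGN
      have heq : G / ((n : ℝ) + 1) * (((n : ℝ) + 1) / G * (inner ℝ g w : ℝ))
          = (inner ℝ g w : ℝ) := by
        field_simp
      rw [mul_neg, heq] at h
      linarith
    · have h := mul_le_mul_of_nonneg_left hq1 hGN
      have heq : G / ((n : ℝ) + 1) * (((n : ℝ) + 1) / G * (inner ℝ g w : ℝ))
          = (inner ℝ g w : ℝ) := by
        field_simp
      rw [heq] at h
      exact h
  rw [max_eq_left hr]
  exact habs
end
end

section
/- Uniform coercivity of the interior Hamiltonian on the orthant (claim (5.6) in the proof of Theorem 4.14): Let E = [0,∞)^d, let H_0 : E × ℝ^d → ℝ be continuous with p ↦ H_0(x,p) convex for each x, let a_i, b_i : E → [0,∞) be continuous, and assume Condition (multi-d). Then for every compact set K ⊆ E, lim_{|p|→∞} inf_{x∈K} H_∅(x,p) = ∞, where H_∅(x,p) = H_0(x,p) + Σ_{k=1}^d [a_k(x)(e^{p_k}−1) + b_k(x)(e^{−p_k}−1)]. -/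
open Set Filter

noncomputable section

/-- The nonnegative orthant `E = [0,∞)^d`. -/
def orthant (d : ℕ) : Set (Euc d) := {x | ∀ i, 0 ≤ x i}

/-- The full Hamiltonian `H_∅(x,p) = H_0(x,p) + Σ_k [a_k(x)(e^{p_k}−1) + b_k(x)(e^{−p_k}−1)]`. -/
def Hempty {d : ℕ} (H0 : Euc d → Euc d → ℝ) (a b : Fin d → Euc d → ℝ)
    (x p : Euc d) : ℝ :=
  H0 x p + ∑ k : Fin d, (a k x * (Real.exp (p k) - 1) + b k x * (Real.exp (-(p k)) - 1))

/-- Condition (multi-d): alternative (a) or alternative (b). -/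
def CondMultiD {d : ℕ} (H0 : Euc d → Euc d → ℝ) (a b : Fin d → Euc d → ℝ) : Prop :=
  ((∀ K ⊆ orthant d, IsCompact K →
      ∃ M ≥ (0:ℝ), ∀ x ∈ K, ∀ p : Euc d, -(‖p‖ * M) ≤ H0 x p) ∧
    (∀ i, ∀ x ∈ orthant d, 0 < a i x ∧ 0 < b i x)) ∨
  ((∀ K ⊆ interior (orthant d), IsCompact K → K.Nonempty →
      ∃ M > (0:ℝ), ∀ M' < M, ∀ᶠ p : Euc d in Filter.cocompact (Euc d),
        ∀ x ∈ K, M' * ‖p‖ ≤ H0 x p) ∧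
    (∃ U : Set (Euc d), IsOpen U ∧ frontier (orthant d) ⊆ U ∧
      ∀ i, ∀ x ∈ U ∩ orthant d, 0 < a i x ∧ 0 < b i x))

/-! ### Auxiliary lemmas -/

private lemma tendsto_aux (δ c B C : ℝ) (hδ : 0 < δ) (hc : 0 < c) :
    Tendsto (fun t : ℝ => δ * Real.exp (c * t) - B * t - C) atTop atTop := by
  refine tendsto_atTop_mono' atTop ?_
    (tendsto_atTop_add_const_right atTop (-C) tendsto_id)
  filter_upwards [eventually_ge_atTop (max 0 (4 * (B + 1) / (δ * c ^ 2)))] with t ht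
  have ht0 : 0 ≤ t := le_trans (le_max_left _ _) ht
  have ht1 : 4 * (B + 1) / (δ * c ^ 2) ≤ t := le_trans (le_max_right _ _) ht
  have h1 : 1 + c * t / 2 ≤ Real.exp (c * t / 2) := by
    have := Real.add_one_le_exp (c * t / 2); linarith
  have h1' : (1 + c * t / 2) ^ 2 ≤ Real.exp (c * t) := by
    have h0 : 0 ≤ 1 + c * t / 2 := by positivity
    calc (1 + c * t / 2) ^ 2 ≤ Real.exp (c * t / 2) ^ 2 := by
          exact pow_le_pow_left₀ h0 h1 2
      _ = Real.exp (c * t) := by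
          rw [← Real.exp_nat_mul]; ring_nf
  have h2 : δ * c ^ 2 / 4 * t ^ 2 ≤ δ * Real.exp (c * t) := by
    have := mul_le_mul_of_nonneg_left h1' hδ.le
    nlinarith [mul_nonneg hδ.le (mul_nonneg hc.le ht0)]
  have h3 : (B + 1) * t ≤ δ * c ^ 2 / 4 * t ^ 2 := by
    have hpos : 0 < δ * c ^ 2 := by positivity
    rw [div_le_iff₀ hpos] at ht1
    nlinarith
  simp only [id_eq]
  linarith

private lemma sum_exp_lb {d : ℕ} (hd : 0 < d) (p : Euc d) :
    Real.exp (‖p‖ / Real.sqrt d) ≤ ∑ k : Fin d, (Real.exp (p k) + Real.exp (-(p k))) := by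
  have : Nonempty (Fin d) := Fin.pos_iff_nonempty.mp hd
  have hne : (Finset.univ : Finset (Fin d)).Nonempty := Finset.univ_nonempty
  obtain ⟨k₀, -, hk₀⟩ := Finset.exists_max_image Finset.univ (fun i => |p i|) hne
  have hsd : (0:ℝ) < Real.sqrt d := Real.sqrt_pos.2 (by exact_mod_cast hd)
  have hnorm : ‖p‖ ≤ Real.sqrt d * |p k₀| := by
    rw [EuclideanSpace.norm_eq]
    have h1 : ∑ i, ‖p i‖ ^ 2 ≤ (d : ℝ) * |p k₀| ^ 2 := by
      calc ∑ i, ‖p i‖ ^ 2 ≤ ∑ _i : Fin d, |p k₀| ^ 2 := by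
            apply Finset.sum_le_sum
            intro i _
            have := hk₀ i (Finset.mem_univ i)
            rw [Real.norm_eq_abs]
            exact pow_le_pow_left₀ (abs_nonneg _) this 2
        _ = (d : ℝ) * |p k₀| ^ 2 := by simp [Finset.sum_const, nsmul_eq_mul]
    calc Real.sqrt (∑ i, ‖p i‖ ^ 2) ≤ Real.sqrt ((d:ℝ) * |p k₀| ^ 2) := Real.sqrt_le_sqrt h1
      _ = Real.sqrt d * |p k₀| := by
          rw [Real.sqrt_mul (by positivity), Real.sqrt_sq (abs_nonneg _)]
  have h2 : ‖p‖ / Real.sqrt d ≤ |p k₀| := by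
    rw [div_le_iff₀ hsd]
    linarith [hnorm, mul_comm (Real.sqrt d) (|p k₀|)]
  calc Real.exp (‖p‖ / Real.sqrt d) ≤ Real.exp |p k₀| := Real.exp_le_exp.2 h2
    _ ≤ Real.exp (p k₀) + Real.exp (-(p k₀)) := by
        rcases abs_cases (p k₀) with ⟨h, _⟩ | ⟨h, _⟩
        · rw [h]; linarith [Real.exp_pos (-(p k₀))]
        · rw [h]; linarith [Real.exp_pos (p k₀)]
    _ ≤ ∑ k : Fin d, (Real.exp (p k) + Real.exp (-(p k))) := by
        apply Finset.single_le_sum (f := fun k => Real.exp (p k) + Real.exp (-(p k)))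
          (fun i _ => by positivity) (Finset.mem_univ k₀)

/-- Key coercivity lemma on a compact set where `a, b` are bounded below by `δ > 0`
and `H0` admits a linear lower bound. -/
private lemma key_onCompact {d : ℕ} (hd : 0 < d) (H0 : Euc d → Euc d → ℝ)
    (a b : Fin d → Euc d → ℝ) (K' : Set (Euc d))
    (δ Amax A B : ℝ) (hδ : 0 < δ) (_hAmax : 0 ≤ Amax) (_hA : 0 ≤ A) (_hB : 0 ≤ B)
    (hlb : ∀ i, ∀ x ∈ K', δ ≤ a i x ∧ δ ≤ b i x)
    (hub : ∀ i, ∀ x ∈ K', a i x ≤ Amax ∧ b i x ≤ Amax)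
    (hH0 : ∀ x ∈ K', ∀ p : Euc d, -(A + B * ‖p‖) ≤ H0 x p) (C : ℝ) :
    ∀ᶠ p : Euc d in cocompact (Euc d), ∀ x ∈ K', C ≤ Hempty H0 a b x p := by
  set C' : ℝ := A + 2 * d * (δ + Amax) with hC'
  have hsd : (0:ℝ) < Real.sqrt d := Real.sqrt_pos.2 (by exact_mod_cast hd)
  have hten : Tendsto (fun p : Euc d =>
      δ * Real.exp ((Real.sqrt d)⁻¹ * ‖p‖) - B * ‖p‖ - C') (cocompact (Euc d)) atTop :=
    (tendsto_aux δ (Real.sqrt d)⁻¹ B C' hδ (by positivity)).comp tendsto_norm_cocompact_atTop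
  filter_upwards [hten.eventually_ge_atTop C] with p hp x hx
  have hsum : δ * ∑ k : Fin d, (Real.exp (p k) + Real.exp (-(p k))) - 2 * d * (δ + Amax)
      ≤ ∑ k : Fin d, (a k x * (Real.exp (p k) - 1) + b k x * (Real.exp (-(p k)) - 1)) := by
    have hterm : ∀ k : Fin d,
        δ * (Real.exp (p k) + Real.exp (-(p k))) - 2 * (δ + Amax)
        ≤ a k x * (Real.exp (p k) - 1) + b k x * (Real.exp (-(p k)) - 1) := by
      intro k
      obtain ⟨ha1, hb1⟩ := hlb k x hx
      obtain ⟨ha2, hb2⟩ := hub k x hx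
      have e1 : Real.exp (p k) - 1 ≥ -1 := by linarith [Real.exp_pos (p k)]
      have e2 : Real.exp (-(p k)) - 1 ≥ -1 := by linarith [Real.exp_pos (-(p k))]
      nlinarith [mul_nonneg (sub_nonneg.2 ha1) (Real.exp_pos (p k)).le,
        mul_nonneg (sub_nonneg.2 hb1) (Real.exp_pos (-(p k))).le]
    calc δ * ∑ k : Fin d, (Real.exp (p k) + Real.exp (-(p k))) - 2 * d * (δ + Amax)
        = ∑ k : Fin d, (δ * (Real.exp (p k) + Real.exp (-(p k))) - 2 * (δ + Amax)) := by
          rw [Finset.sum_sub_distrib, ← Finset.mul_sum, Finset.sum_const]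
          simp [nsmul_eq_mul]; ring
      _ ≤ _ := Finset.sum_le_sum (fun k _ => hterm k)
  have hexp := sum_exp_lb hd p
  have h1 : δ * Real.exp ((Real.sqrt d)⁻¹ * ‖p‖)
      ≤ δ * ∑ k : Fin d, (Real.exp (p k) + Real.exp (-(p k))) := by
    apply mul_le_mul_of_nonneg_left _ hδ.le
    rw [inv_mul_eq_div]
    exact hexp
  have h2 := hH0 x hx p
  unfold Hempty
  calc C ≤ δ * Real.exp ((Real.sqrt d)⁻¹ * ‖p‖) - B * ‖p‖ - C' := hp
    _ ≤ _ := by rw [hC']; push_cast; nlinarith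

private lemma exists_ub {d : ℕ} [Nonempty (Fin d)] (a b : Fin d → Euc d → ℝ) (S : Set (Euc d))
    (hac : ∀ i, ContinuousOn (a i) S) (hbc : ∀ i, ContinuousOn (b i) S)
    (K' : Set (Euc d)) (hK'S : K' ⊆ S) (hK' : IsCompact K') :
    ∃ Amax ≥ (0:ℝ), ∀ i, ∀ x ∈ K', a i x ≤ Amax ∧ b i x ≤ Amax := by
  have hu : ∀ i : Fin d, ∃ c : ℝ, ∀ x ∈ K', a i x ≤ c ∧ b i x ≤ c := by
    intro i
    obtain ⟨c1, hc1⟩ := (hK'.bddAbove_image ((hac i).mono hK'S))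
    obtain ⟨c2, hc2⟩ := (hK'.bddAbove_image ((hbc i).mono hK'S))
    exact ⟨max c1 c2, fun x hx =>
      ⟨le_trans (hc1 (mem_image_of_mem _ hx)) (le_max_left _ _),
       le_trans (hc2 (mem_image_of_mem _ hx)) (le_max_right _ _)⟩⟩
  choose c hc using hu
  refine ⟨max (Finset.univ.sup' Finset.univ_nonempty c) 0, le_max_right _ _, fun i x hx => ?_⟩
  have hle : c i ≤ max (Finset.univ.sup' Finset.univ_nonempty c) 0 :=
    le_trans (Finset.le_sup' c (Finset.mem_univ i)) (le_max_left _ _)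
  exact ⟨le_trans (hc i x hx).1 hle, le_trans (hc i x hx).2 hle⟩

private lemma exists_lb {d : ℕ} [Nonempty (Fin d)] (a b : Fin d → Euc d → ℝ) (S : Set (Euc d))
    (hac : ∀ i, ContinuousOn (a i) S) (hbc : ∀ i, ContinuousOn (b i) S)
    (hpos : ∀ i, ∀ x ∈ S, 0 < a i x ∧ 0 < b i x)
    (K' : Set (Euc d)) (hK'S : K' ⊆ S) (hK' : IsCompact K') :
    ∃ δ > (0:ℝ), ∀ i, ∀ x ∈ K', δ ≤ a i x ∧ δ ≤ b i x := by
  rcases K'.eq_empty_or_nonempty with rfl | hne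
  · exact ⟨1, one_pos, fun i x hx => absurd hx (notMem_empty x)⟩
  have hl : ∀ i : Fin d, ∃ c : ℝ, 0 < c ∧ ∀ x ∈ K', c ≤ a i x ∧ c ≤ b i x := by
    intro i
    obtain ⟨z1, hz1, hz1'⟩ := hK'.exists_isMinOn hne ((hac i).mono hK'S)
    obtain ⟨z2, hz2, hz2'⟩ := hK'.exists_isMinOn hne ((hbc i).mono hK'S)
    refine ⟨min (a i z1) (b i z2),
      lt_min (hpos i z1 (hK'S hz1)).1 (hpos i z2 (hK'S hz2)).2, fun x hx => ?_⟩
    exact ⟨le_trans (min_le_left _ _) (hz1' hx), le_trans (min_le_right _ _) (hz2' hx)⟩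
  choose c hc0 hc using hl
  refine ⟨Finset.univ.inf' Finset.univ_nonempty c, ?_, fun i x hx => ?_⟩
  · exact (Finset.lt_inf'_iff _).2 fun i _ => hc0 i
  have hge : Finset.univ.inf' Finset.univ_nonempty c ≤ c i :=
    Finset.inf'_le c (Finset.mem_univ i)
  exact ⟨le_trans hge (hc i x hx).1, le_trans hge (hc i x hx).2⟩

private lemma orthant_closed (d : ℕ) : IsClosed (orthant d) := by
  have : orthant d = ⋂ i : Fin d, {x : Euc d | 0 ≤ x i} := by
    ext x; simp [orthant]
  rw [this]
  exact isClosed_iInter fun i =>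
    isClosed_le continuous_const (PiLp.continuous_apply 2 _ i)

/-- Uniform coercivity of the interior Hamiltonian on the orthant (claim (5.6)):
under Condition (multi-d), for every nonempty compact `K ⊆ E`,
`inf_{x∈K} H_∅(x,p) → ∞` as `|p| → ∞`. -/
theorem orthant_uniform_coercivity {d : ℕ}
    (H0 : Euc d → Euc d → ℝ) (a b : Fin d → Euc d → ℝ)
    (hH0c : ContinuousOn (fun q : Euc d × Euc d => H0 q.1 q.2) (orthant d ×ˢ univ))
    (hH0conv : ∀ x ∈ orthant d, ConvexOn ℝ univ (H0 x))
    (hac : ∀ i, ContinuousOn (a i) (orthant d))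
    (hbc : ∀ i, ContinuousOn (b i) (orthant d))
    (hann : ∀ i, ∀ x ∈ orthant d, 0 ≤ a i x)
    (hbnn : ∀ i, ∀ x ∈ orthant d, 0 ≤ b i x)
    (hcond : CondMultiD H0 a b)
    (K : Set (Euc d)) (hKE : K ⊆ orthant d) (hK : IsCompact K) (hKne : K.Nonempty) :
    Tendsto (fun p : Euc d => sInf ((fun x => Hempty H0 a b x p) '' K))
      (Filter.cocompact (Euc d)) atTop := by
  rcases Nat.eq_zero_or_pos d with hd0 | hd
  · subst hd0
    haveI : Subsingleton (Euc 0) := ⟨fun x y => by ext i; exact i.elim0⟩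
    haveI : Finite (Euc 0) := Finite.of_subsingleton
    rw [Filter.cocompact_eq_bot]
    exact tendsto_bot
  haveI : Nonempty (Fin d) := Fin.pos_iff_nonempty.mp hd
  rw [tendsto_atTop]
  intro C
  suffices h : ∀ᶠ p : Euc d in cocompact (Euc d), ∀ x ∈ K, C ≤ Hempty H0 a b x p by
    filter_upwards [h] with p hp
    exact le_csInf (hKne.image _) (by rintro y ⟨x, hx, rfl⟩; exact hp x hx)
  rcases hcond with ⟨hH0lb, hpos⟩ | ⟨hcoerc, U, hUo, hUfr, hUpos⟩
  · -- Case (a)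
    obtain ⟨M, hM0, hMlb⟩ := hH0lb K hKE hK
    obtain ⟨δ, hδ, hlb⟩ := exists_lb a b (orthant d) hac hbc hpos K hKE hK
    obtain ⟨Amax, hAmax, hub⟩ := exists_ub a b (orthant d) hac hbc K hKE hK
    have hH0' : ∀ x ∈ K, ∀ p : Euc d, -(0 + M * ‖p‖) ≤ H0 x p := by
      intro x hx p
      calc -(0 + M * ‖p‖) = -(‖p‖ * M) := by ring
        _ ≤ H0 x p := hMlb x hx p
    exact key_onCompact hd H0 a b K δ Amax 0 M hδ hAmax le_rfl hM0 hlb hub hH0' C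
  · -- Case (b)
    have hsub : K \ U ⊆ interior (orthant d) := by
      rintro x ⟨hxK, hxU⟩
      have hxo : x ∈ orthant d := hKE hxK
      by_contra hxi
      exact hxU (hUfr ⟨subset_closure hxo, hxi⟩)
    obtain ⟨L, hL, hKUL, hLint⟩ := exists_compact_between (hK.diff hUo) isOpen_interior hsub
    set K₁ : Set (Euc d) := K ∩ L with hK₁def
    set K₂ : Set (Euc d) := K \ interior L with hK₂def
    have hK₁ : IsCompact K₁ := hK.inter_right hL.isClosed
    have hK₂ : IsCompact K₂ := hK.diff isOpen_interior
    have hK₁int : K₁ ⊆ interior (orthant d) := fun x hx => hLint hx.2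
    have hK₂U : K₂ ⊆ U := by
      rintro x ⟨hxK, hxiL⟩
      by_contra hxU
      exact hxiL (hKUL ⟨hxK, hxU⟩)
    have hcover : K ⊆ K₁ ∪ K₂ := by
      intro x hx
      by_cases h : x ∈ interior L
      · exact Or.inl ⟨hx, interior_subset h⟩
      · exact Or.inr ⟨hx, h⟩
    -- linear lower bound for `H0` on `K₂` via convexity
    have hcomp : IsCompact (K₂ ×ˢ Metric.closedBall (0 : Euc d) 1) :=
      hK₂.prod (isCompact_closedBall _ _)
    have hsub2 : K₂ ×ˢ Metric.closedBall (0 : Euc d) 1 ⊆ orthant d ×ˢ univ :=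
      prod_mono (fun x hx => hKE hx.1) (subset_univ _)
    obtain ⟨A0, hA0⟩ := hcomp.exists_bound_of_continuousOn (hH0c.mono hsub2)
    set A : ℝ := max A0 0 with hAdef
    have hA : 0 ≤ A := le_max_right _ _
    have hbd : ∀ x ∈ K₂, ∀ q : Euc d, ‖q‖ ≤ 1 → |H0 x q| ≤ A := by
      intro x hx q hq
      have := hA0 (x, q) ⟨hx, by simpa [Metric.mem_closedBall, dist_zero_right] using hq⟩
      exact le_trans (by simpa using this) (le_max_left _ _)
    have hlin : ∀ x ∈ K₂, ∀ p : Euc d, -(2 * A + 2 * A * ‖p‖) ≤ H0 x p := by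
      intro x hx p
      by_cases hp : ‖p‖ ≤ 1
      · have := hbd x hx p hp
        have hn : 0 ≤ ‖p‖ := norm_nonneg _
        rw [abs_le] at this
        nlinarith
      · push_neg at hp
        have hp0 : (0:ℝ) < ‖p‖ := lt_trans one_pos hp
        set t : ℝ := ‖p‖⁻¹ with htdef
        have ht0 : 0 < t := inv_pos.2 hp0
        have ht1 : t ≤ 1 := by
          rw [htdef]
          exact inv_le_one_of_one_le₀ hp.le
        have htp : t * ‖p‖ = 1 := inv_mul_cancel₀ hp0.ne'
        have hq : ‖t • p‖ ≤ 1 := by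
          rw [norm_smul, Real.norm_eq_abs, abs_of_pos ht0, htp]
        have hconv := (hH0conv x (hKE hx.1)).2 (mem_univ (0 : Euc d)) (mem_univ p)
          (by linarith : (0:ℝ) ≤ 1 - t) ht0.le (by ring)
        rw [smul_zero, zero_add] at hconv
        simp only [smul_eq_mul] at hconv
        have h1 : |H0 x (t • p)| ≤ A := hbd x hx _ hq
        have h2 : |H0 x 0| ≤ A := hbd x hx 0 (by simp)
        rw [abs_le] at h1 h2
        have key : -(2 * A) ≤ t * H0 x p := by
          nlinarith [mul_le_mul_of_nonneg_left h2.2 (by linarith : (0:ℝ) ≤ 1 - t)]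
        rw [← mul_le_mul_iff_right₀ ht0]
        calc t * -(2 * A + 2 * A * ‖p‖) = -(2 * A * t) - 2 * A * (t * ‖p‖) := by ring
          _ = -(2 * A * t) - 2 * A := by rw [htp]; ring
          _ ≤ -(2 * A) := by nlinarith
          _ ≤ t * H0 x p := key
    -- coercivity on K₂
    obtain ⟨δ₂, hδ₂, hlb₂⟩ := exists_lb a b (U ∩ orthant d)
      (fun i => (hac i).mono inter_subset_right) (fun i => (hbc i).mono inter_subset_right)
      hUpos K₂ (fun x hx => ⟨hK₂U hx, hKE hx.1⟩) hK₂
    obtain ⟨Amax₂, hAmax₂, hub₂⟩ :=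
      exists_ub a b (orthant d) hac hbc K₂ (fun x hx => hKE hx.1) hK₂
    have ev₂ := key_onCompact hd H0 a b K₂ δ₂ Amax₂ (2 * A) (2 * A) hδ₂ hAmax₂
      (by linarith) (by linarith) hlb₂ hub₂ hlin C
    -- coercivity on K₁
    have ev₁ : ∀ᶠ p : Euc d in cocompact (Euc d), ∀ x ∈ K₁, C ≤ Hempty H0 a b x p := by
      rcases K₁.eq_empty_or_nonempty with h₁ | hne₁
      · rw [h₁]
        exact Filter.Eventually.of_forall (fun p x hx => absurd hx (notMem_empty x))
      · obtain ⟨M, hM, hMe⟩ := hcoerc K₁ hK₁int hK₁ hne₁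
        obtain ⟨Amax₁, hAmax₁, hub₁⟩ :=
          exists_ub a b (orthant d) hac hbc K₁ (fun x hx => hKE hx.1) hK₁
        have hnE : ∀ᶠ p : Euc d in cocompact (Euc d),
            2 * (C + 2 * d * Amax₁) / M ≤ ‖p‖ :=
          tendsto_norm_cocompact_atTop.eventually_ge_atTop _
        filter_upwards [hMe (M / 2) (by linarith), hnE] with p h1 h2 x hx
        have hH0x := h1 x hx
        have hsum : -(2 * d * Amax₁)
            ≤ ∑ k : Fin d, (a k x * (Real.exp (p k) - 1) + b k x * (Real.exp (-(p k)) - 1)) := by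
          have hterm : ∀ k : Fin d, -(2 * Amax₁)
              ≤ a k x * (Real.exp (p k) - 1) + b k x * (Real.exp (-(p k)) - 1) := by
            intro k
            have ha := hann k x (hKE hx.1)
            have hb := hbnn k x (hKE hx.1)
            obtain ⟨ha2, hb2⟩ := hub₁ k x hx
            have e1 : Real.exp (p k) - 1 ≥ -1 := by linarith [Real.exp_pos (p k)]
            have e2 : Real.exp (-(p k)) - 1 ≥ -1 := by linarith [Real.exp_pos (-(p k))]
            nlinarith [mul_nonneg ha (Real.exp_pos (p k)).le,
              mul_nonneg hb (Real.exp_pos (-(p k))).le]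
          calc -(2 * (d : ℝ) * Amax₁) = ∑ _k : Fin d, -(2 * Amax₁) := by
                simp [Finset.sum_const, nsmul_eq_mul]; ring
            _ ≤ _ := Finset.sum_le_sum fun k _ => hterm k
        have hnorm : C + 2 * d * Amax₁ ≤ M / 2 * ‖p‖ := by
          have hmul := mul_le_mul_of_nonneg_left h2 (by linarith : (0:ℝ) ≤ M / 2)
          calc C + 2 * d * Amax₁ = M / 2 * (2 * (C + 2 * d * Amax₁) / M) := by
                field_simp
            _ ≤ M / 2 * ‖p‖ := hmul
        unfold Hempty
        linarith
    filter_upwards [ev₁, ev₂] with p h1 h2 x hx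
    rcases hcover hx with h | h
    · exact h1 x h
    · exact h2 x h
end
end

section
/- Good containment function for birth–death processes with immigration (Lemma 5.2): Let λ, μ, ρ : [0,∞) → [0,∞) be continuous functions and suppose there exist constants C > 0 and M ≥ e such that λ(x) + ρ(x) ≤ C·x·log x for all x ≥ M. Define H(x,p) = (λ(x)+ρ(x))(e^p − 1) + μ(x)(e^{−p} − 1) for x ≥ 0, p ∈ ℝ. Then there exists a twice continuously differentiable function Υ : [0,∞) → [0,∞) such that Υ(x₀) = 0 for some x₀ ∈ [0,∞), the sublevel set {x ≥ 0 : Υ(x) ≤ c} is compact for every c ≥ 0, and sup_{x≥0} H(x, Υ'(x)) < ∞. -/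
open Set Filter

noncomputable def Ups : ℝ → ℝ := fun x => Real.log (Real.log (x + Real.exp 1))

lemma Ups_pos_aux {x : ℝ} (hx : 0 ≤ x) : 1 < x + Real.exp 1 ∨ 1 = x + Real.exp 1 := by
  left; linarith [Real.exp_one_gt_d9]

lemma add_exp_pos {x : ℝ} (hx : 0 ≤ x) : 0 < x + Real.exp 1 := by
  linarith [Real.exp_pos 1]

lemma log_add_exp_ge {x : ℝ} (hx : 0 ≤ x) : 1 ≤ Real.log (x + Real.exp 1) := by
  have := Real.log_le_log (Real.exp_pos 1)
    (show Real.exp 1 ≤ x + Real.exp 1 by linarith)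
  rwa [Real.log_exp] at this

lemma Ups_hasDerivAt {x : ℝ} (hx : 0 ≤ x) :
    HasDerivAt Ups (((x + Real.exp 1) * Real.log (x + Real.exp 1))⁻¹) x := by
  have hpos := add_exp_pos hx
  have hlog : 0 < Real.log (x + Real.exp 1) := lt_of_lt_of_le one_pos (log_add_exp_ge hx)
  have h1 : HasDerivAt (fun y : ℝ => y + Real.exp 1) 1 x := (hasDerivAt_id x).add_const _
  have h2 : HasDerivAt (fun y : ℝ => Real.log (y + Real.exp 1)) ((x + Real.exp 1)⁻¹ * 1) x :=
    by have := (Real.hasDerivAt_log hpos.ne').comp x h1; exact this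
  have h3 : HasDerivAt Ups ((Real.log (x + Real.exp 1))⁻¹ * ((x + Real.exp 1)⁻¹ * 1)) x :=
    (Real.hasDerivAt_log hlog.ne').comp x h2
  convert h3 using 1
  rw [mul_inv]
  ring

lemma Ups_deriv {x : ℝ} (hx : 0 ≤ x) :
    derivWithin Ups (Ici 0) x = ((x + Real.exp 1) * Real.log (x + Real.exp 1))⁻¹ := by
  rw [(Ups_hasDerivAt hx).differentiableAt.derivWithin (uniqueDiffOn_Ici 0 x hx)]
  exact (Ups_hasDerivAt hx).deriv

lemma Ups_deriv_nonneg {x : ℝ} (hx : 0 ≤ x) :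
    0 ≤ ((x + Real.exp 1) * Real.log (x + Real.exp 1))⁻¹ := by
  have hpos := add_exp_pos hx
  have hlog : 0 < Real.log (x + Real.exp 1) := lt_of_lt_of_le one_pos (log_add_exp_ge hx)
  positivity

lemma Ups_deriv_le_one {x : ℝ} (hx : 0 ≤ x) :
    ((x + Real.exp 1) * Real.log (x + Real.exp 1))⁻¹ ≤ 1 := by
  have hpos := add_exp_pos hx
  have hlog := log_add_exp_ge hx
  have he : (1:ℝ) ≤ x + Real.exp 1 := by linarith [Real.exp_one_gt_d9]
  have : (1:ℝ) ≤ (x + Real.exp 1) * Real.log (x + Real.exp 1) := by nlinarith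
  exact inv_le_one_of_one_le₀ this

lemma exp_sub_one_le {p : ℝ} (hp0 : 0 ≤ p) (hp1 : p ≤ 1) :
    Real.exp p - 1 ≤ (Real.exp 1 - 1) * p := by
  have h := convexOn_exp.2 (mem_univ (0:ℝ)) (mem_univ (1:ℝ))
    (by linarith : (0:ℝ) ≤ 1 - p) hp0 (by ring)
  simp only [smul_eq_mul, mul_zero, mul_one, zero_add, Real.exp_zero] at h
  nlinarith [h]

/-- Good containment function for birth–death processes with immigration (Lemma 5.2):
if `λ, μ, ρ : [0,∞) → [0,∞)` are continuous and `λ + ρ` grows at most like `C·x·log x`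
at infinity, then the Hamiltonian `H(x,p) = (λ(x)+ρ(x))(e^p−1) + μ(x)(e^{−p}−1)` admits
a good containment function `Υ`. -/
theorem bd_immigration_good_containment
    (lam mu rho : ℝ → ℝ)
    (hlamc : ContinuousOn lam (Ici 0)) (hmuc : ContinuousOn mu (Ici 0))
    (hrhoc : ContinuousOn rho (Ici 0))
    (hlam0 : ∀ x ∈ Ici (0:ℝ), 0 ≤ lam x) (hmu0 : ∀ x ∈ Ici (0:ℝ), 0 ≤ mu x)
    (hrho0 : ∀ x ∈ Ici (0:ℝ), 0 ≤ rho x)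
    (hgrowth : ∃ C > (0:ℝ), ∃ M ≥ Real.exp 1, ∀ x ≥ M,
      lam x + rho x ≤ C * x * Real.log x) :
    ∃ Υ : ℝ → ℝ, ContDiffOn ℝ 2 Υ (Ici 0) ∧ (∀ x ∈ Ici (0:ℝ), 0 ≤ Υ x) ∧
      (∃ x₀ ∈ Ici (0:ℝ), Υ x₀ = 0) ∧
      (∀ c : ℝ, 0 ≤ c → IsCompact {x : ℝ | x ∈ Ici 0 ∧ Υ x ≤ c}) ∧
      ∃ C' : ℝ, ∀ x ∈ Ici (0:ℝ),
        (lam x + rho x) * (Real.exp (derivWithin Υ (Ici 0) x) - 1) +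
          mu x * (Real.exp (-(derivWithin Υ (Ici 0) x)) - 1) ≤ C' := by
  obtain ⟨C, hC, M, hM, hgr⟩ := hgrowth
  refine ⟨Ups, ?_, ?_, ?_, ?_, ?_⟩
  · -- ContDiffOn
    intro x hx
    have hpos := add_exp_pos hx
    have hlog : 0 < Real.log (x + Real.exp 1) := lt_of_lt_of_le one_pos (log_add_exp_ge hx)
    have h1 : ContDiffAt ℝ 2 (fun y : ℝ => y + Real.exp 1) x :=
      (contDiff_id.add contDiff_const).contDiffAt
    have h2 : ContDiffAt ℝ 2 (fun y : ℝ => Real.log (y + Real.exp 1)) x :=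
      by have := (Real.contDiffAt_log.2 hpos.ne').comp x h1; exact this
    have h3 : ContDiffAt ℝ 2 Ups x := (Real.contDiffAt_log.2 hlog.ne').comp x h2
    exact h3.contDiffWithinAt
  · -- nonneg
    intro x hx
    exact Real.log_nonneg (log_add_exp_ge hx)
  · refine ⟨0, self_mem_Ici, ?_⟩
    simp [Ups]
  · -- sublevel compactness
    intro c hc
    have hsub : {x : ℝ | x ∈ Ici 0 ∧ Ups x ≤ c} ⊆ Icc 0 (Real.exp (Real.exp c)) := by
      rintro x ⟨hx, hxc⟩
      refine ⟨hx, ?_⟩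
      have hpos := add_exp_pos hx
      have hlog : 0 < Real.log (x + Real.exp 1) := lt_of_lt_of_le one_pos (log_add_exp_ge hx)
      have h1 : Real.log (x + Real.exp 1) ≤ Real.exp c :=
        (Real.log_le_iff_le_exp hlog).mp hxc
      have h2 : x + Real.exp 1 ≤ Real.exp (Real.exp c) :=
        (Real.log_le_iff_le_exp hpos).mp h1
      linarith [Real.exp_pos 1]
    have hcl : IsClosed {x : ℝ | x ∈ Ici 0 ∧ Ups x ≤ c} := by
      have hcont : ContinuousOn Ups (Ici 0) := by
        intro x hx
        have hpos := add_exp_pos hx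
        have hlog : 0 < Real.log (x + Real.exp 1) := lt_of_lt_of_le one_pos (log_add_exp_ge hx)
        exact ((((continuous_id.add continuous_const).continuousAt).log
          hpos.ne').log hlog.ne').continuousWithinAt
      have h := hcont.preimage_isClosed_of_isClosed isClosed_Ici
        (isClosed_Iic : IsClosed (Iic c))
      exact h
    exact (isCompact_Icc).of_isClosed_subset hcl hsub
  · -- Hamiltonian bound
    obtain ⟨B, hB⟩ := (isCompact_Icc.image_of_continuousOn
      ((hlamc.add hrhoc).mono (Icc_subset_Ici_self : Icc (0:ℝ) M ⊆ Ici 0))).bddAbove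
    refine ⟨(max B C) * (Real.exp 1 - 1), ?_⟩
    intro x hx
    set p := derivWithin Ups (Ici 0) x with hp
    have hpval : p = ((x + Real.exp 1) * Real.log (x + Real.exp 1))⁻¹ := Ups_deriv hx
    have hp0 : 0 ≤ p := hpval ▸ Ups_deriv_nonneg hx
    have hp1 : p ≤ 1 := hpval ▸ Ups_deriv_le_one hx
    have hexp1 : (1:ℝ) ≤ Real.exp 1 := by linarith [Real.exp_one_gt_d9]
    have hlr : 0 ≤ lam x + rho x := add_nonneg (hlam0 x hx) (hrho0 x hx)
    have hmuterm : mu x * (Real.exp (-p) - 1) ≤ 0 := by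
      apply mul_nonpos_of_nonneg_of_nonpos (hmu0 x hx)
      have : Real.exp (-p) ≤ 1 := Real.exp_le_one_iff.mpr (by linarith)
      linarith
    have hmain : (lam x + rho x) * (Real.exp p - 1) ≤ (max B C) * (Real.exp 1 - 1) := by
      rcases le_or_gt x M with hxM | hxM
      · -- bounded region
        have hBx : lam x + rho x ≤ B := hB ⟨x, ⟨hx, hxM⟩, rfl⟩
        have hBmax : lam x + rho x ≤ max B C := le_trans hBx (le_max_left _ _)
        have hexp : Real.exp p - 1 ≤ Real.exp 1 - 1 := by
          have := Real.exp_le_exp.mpr hp1; linarith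
        have hexpnn : 0 ≤ Real.exp p - 1 := by
          have := Real.one_le_exp hp0; linarith
        calc (lam x + rho x) * (Real.exp p - 1) ≤ (max B C) * (Real.exp p - 1) :=
              mul_le_mul_of_nonneg_right hBmax hexpnn
          _ ≤ (max B C) * (Real.exp 1 - 1) := by
              apply mul_le_mul_of_nonneg_left hexp
              exact le_trans hlr hBmax
      · -- growth region
        have hxe : Real.exp 1 ≤ x := le_trans hM hxM.le
        have hx1 : 1 < x := lt_of_lt_of_le (by linarith [Real.exp_one_gt_d9]) hxe
        have hlogx : 1 ≤ Real.log x := by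
          have := Real.log_le_log (Real.exp_pos 1) hxe
          rwa [Real.log_exp] at this
        have hgx : lam x + rho x ≤ C * x * Real.log x := hgr x hxM.le
        have hmono : x * Real.log x ≤ (x + Real.exp 1) * Real.log (x + Real.exp 1) := by
          have h1 : Real.log x ≤ Real.log (x + Real.exp 1) :=
            Real.log_le_log (by linarith) (by linarith [Real.exp_pos 1])
          have h2 : 0 < Real.log (x + Real.exp 1) := lt_of_lt_of_le one_pos (log_add_exp_ge hx)
          nlinarith
        have hexp : Real.exp p - 1 ≤ (Real.exp 1 - 1) * p := exp_sub_one_le hp0 hp1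
        have hppos : 0 < (x + Real.exp 1) * Real.log (x + Real.exp 1) := by
          have hpos := add_exp_pos hx
          have hlog : 0 < Real.log (x + Real.exp 1) := lt_of_lt_of_le one_pos (log_add_exp_ge hx)
          positivity
        have key : (lam x + rho x) * p ≤ C := by
          rw [hpval]
          rw [← div_eq_mul_inv, div_le_iff₀ hppos]
          calc lam x + rho x ≤ C * x * Real.log x := hgx
            _ = C * (x * Real.log x) := by ring
            _ ≤ C * ((x + Real.exp 1) * Real.log (x + Real.exp 1)) :=
                mul_le_mul_of_nonneg_left hmono hC.le
        calc (lam x + rho x) * (Real.exp p - 1)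
            ≤ (lam x + rho x) * ((Real.exp 1 - 1) * p) :=
              mul_le_mul_of_nonneg_left hexp hlr
          _ = (Real.exp 1 - 1) * ((lam x + rho x) * p) := by ring
          _ ≤ (Real.exp 1 - 1) * C := mul_le_mul_of_nonneg_left key (by linarith)
          _ ≤ (max B C) * (Real.exp 1 - 1) := by
              have : C ≤ max B C := le_max_right _ _
              nlinarith
    linarith
end

section
/- Good containment function for growing populations (Lemma 5.3): Let v_k : (0,∞) → [0,∞), k ≥ 1, be continuous functions such that (a) Σ_{k=1}^∞ v_k(x) > 0 for all x > 0, (b) the function x ↦ Σ_{k=1}^∞ k·v_k(x) is bounded on (0,∞), and (c) there exists α > 0 with sup_{x>0} Σ_{k=1}^∞ x·v_k(x)·(k²/(1+x)²)·e^{αk/(1+x)} < ∞. Define H(x,p) = Σ_{k=1}^∞ x·v_k(x)(e^{kp} − 1) for x > 0, p ∈ ℝ. Then there exists a twice continuously differentiable function Υ : (0,∞) → [0,∞) such that Υ(x₀) = 0 for some x₀ ∈ (0,∞), the sublevel set {x > 0 : Υ(x) ≤ c} is compact in (0,∞) for every c ≥ 0, and sup_{x>0} H(x, Υ'(x)) <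 ∞. -/
open Set Filter
open scoped ENNReal

lemma aux_exp_ineq (t : ℝ) (ht : 0 ≤ t) : Real.exp t - 1 ≤ t + t^2 * Real.exp t := by
  have h := mul_le_mul_of_nonneg_right (Real.add_one_le_exp (-t)) (Real.exp_pos t).le
  rw [Real.exp_neg] at h
  have h2 : (Real.exp t)⁻¹ * Real.exp t = 1 := inv_mul_cancel₀ (Real.exp_pos t).ne'
  nlinarith [Real.exp_pos t, Real.add_one_le_exp t]

lemma aux_tsum_bound {f : ℕ → ℝ} (hf : ∀ k, 0 ≤ f k) {B : ℝ}
    (h : (∑' k, ENNReal.ofReal (f k)) ≤ ENNReal.ofReal B) :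
    Summable f ∧ (∑' k, f k) ≤ max B 0 := by
  have hne : (∑' k, ENNReal.ofReal (f k)) ≠ ⊤ :=
    (lt_of_le_of_lt h ENNReal.ofReal_lt_top).ne
  have hs : Summable f := by
    have := ENNReal.summable_toReal hne
    simpa [ENNReal.toReal_ofReal (hf _)] using this
  refine ⟨hs, ?_⟩
  have h3 : ENNReal.ofReal (∑' k, f k) ≤ ENNReal.ofReal (max B 0) := by
    rw [ENNReal.ofReal_tsum_of_nonneg hf hs]
    exact h.trans (ENNReal.ofReal_le_ofReal (le_max_left _ _))
  exact (ENNReal.ofReal_le_ofReal_iff (le_max_right _ _)).mp h3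

lemma aux_deriv (α x : ℝ) (hx : 0 < x) :
    HasDerivAt (fun y : ℝ => α * Real.log (1+y) - α/2 * Real.log y - α * Real.log 2)
      (α/(1+x) - α/(2*x)) x := by
  have h1x : (0:ℝ) < 1 + x := by linarith
  have h1 : HasDerivAt (fun y : ℝ => Real.log (1+y)) (1+x)⁻¹ x := by
    have := (Real.hasDerivAt_log h1x.ne').comp x ((hasDerivAt_id x).const_add 1)
    simpa [Function.comp_def] using this
  have h2 : HasDerivAt Real.log x⁻¹ x := Real.hasDerivAt_log hx.ne'
  have := ((h1.const_mul α).sub (h2.const_mul (α/2))).sub (hasDerivAt_const x (α * Real.log 2))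
  have e : α/(1+x) - α/(2*x) = α * (1 + x)⁻¹ - α / 2 * x⁻¹ - 0 := by ring
  rw [e]; exact this

/-- Good containment function for growing populations (Lemma 5.3): under conditions
(a), (b), (c) on the offspring rates `v_k` (indexed by `k ≥ 1`; we use `v : ℕ → ℝ → ℝ`
with `v 0 = 0`), the Hamiltonian `H(x,p) = Σ_k x·v_k(x)(e^{kp} − 1)` on `(0,∞)` admits a
good containment function `Υ`. -/
theorem growing_population_good_containment
    (v : ℕ → ℝ → ℝ) (hv0 : ∀ x, v 0 x = 0)
    (hvc : ∀ k, ContinuousOn (v k) (Ioi 0))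
    (hvnn : ∀ k, ∀ x ∈ Ioi (0:ℝ), 0 ≤ v k x)
    (hsum_pos : ∀ x ∈ Ioi (0:ℝ), 0 < ∑' k : ℕ, ENNReal.ofReal (v k x))
    (hbdd : ∃ B : ℝ, ∀ x ∈ Ioi (0:ℝ),
      (∑' k : ℕ, ENNReal.ofReal ((k : ℝ) * v k x)) ≤ ENNReal.ofReal B)
    (hexp : ∃ α > (0:ℝ), ∃ B : ℝ, ∀ x ∈ Ioi (0:ℝ),
      (∑' k : ℕ, ENNReal.ofReal
        (x * v k x * ((k : ℝ) ^ 2 / (1 + x) ^ 2) * Real.exp (α * k / (1 + x))))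
        ≤ ENNReal.ofReal B) :
    ∃ Υ : ℝ → ℝ, ContDiffOn ℝ 2 Υ (Ioi 0) ∧ (∀ x ∈ Ioi (0:ℝ), 0 ≤ Υ x) ∧
      (∃ x₀ ∈ Ioi (0:ℝ), Υ x₀ = 0) ∧
      (∀ c : ℝ, 0 ≤ c → IsCompact {x : ℝ | 0 < x ∧ Υ x ≤ c}) ∧
      ∃ C' : ℝ, ∀ x ∈ Ioi (0:ℝ),
        (∑' k : ℕ, x * v k x * (Real.exp ((k : ℝ) * derivWithin Υ (Ioi 0) x) - 1)) ≤ C' := by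
  obtain ⟨B1, hB1⟩ := hbdd
  obtain ⟨α, hα, B2, hB2⟩ := hexp
  set Υ : ℝ → ℝ := fun y => α * Real.log (1+y) - α/2 * Real.log y - α * Real.log 2 with hΥdef
  -- smoothness
  have hsm : ContDiffOn ℝ 2 Υ (Ioi 0) := by
    apply ContDiffOn.sub
    apply ContDiffOn.sub
    · exact contDiffOn_const.mul
        (((contDiffOn_const.add contDiffOn_id)).log
          (fun x hx => by have : (0:ℝ) < x := hx; simp only [id]; positivity))
    · exact contDiffOn_const.mul (contDiffOn_id.log (fun x hx => ne_of_gt hx))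
    · exact contDiffOn_const
  -- nonnegativity
  have hnn : ∀ x ∈ Ioi (0:ℝ), 0 ≤ Υ x := by
    intro x hx
    have hx0 : (0:ℝ) < x := hx
    have hs : Real.sqrt x ^ 2 = x := Real.sq_sqrt hx0.le
    have h1 : 2 * Real.sqrt x ≤ 1 + x := by nlinarith [sq_nonneg (1 - Real.sqrt x)]
    have hsp : 0 < Real.sqrt x := Real.sqrt_pos.mpr hx0
    have h2 : Real.log (2 * Real.sqrt x) ≤ Real.log (1+x) :=
      Real.log_le_log (by positivity) h1
    rw [Real.log_mul two_ne_zero hsp.ne', Real.log_sqrt hx0.le] at h2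
    have : 0 ≤ Real.log (1+x) - Real.log x / 2 - Real.log 2 := by linarith
    have := mul_nonneg hα.le this
    simp only [hΥdef]
    ring_nf
    ring_nf at this
    linarith
  -- zero point
  have hzero : Υ 1 = 0 := by
    simp only [hΥdef, Real.log_one]
    norm_num
  -- derivative
  have hderiv : ∀ x ∈ Ioi (0:ℝ), derivWithin Υ (Ioi 0) x = α/(1+x) - α/(2*x) := by
    intro x hx
    rw [derivWithin_of_isOpen isOpen_Ioi hx]
    exact (aux_deriv α x hx).deriv
  refine ⟨Υ, hsm, hnn, ⟨1, by norm_num, hzero⟩, ?_, ?_⟩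
  -- compactness of sublevel sets
  · intro c hc
    set L := 2*(c + α*Real.log 2)/α with hL
    have hL0 : 0 ≤ L := by
      have h2 : (0:ℝ) < Real.log 2 := Real.log_pos (by norm_num)
      have : 0 ≤ c + α * Real.log 2 := by nlinarith
      positivity
    have hsub : {x : ℝ | 0 < x ∧ Υ x ≤ c} ⊆ Icc (Real.exp (-L)) (Real.exp L) := by
      rintro x ⟨hx0, hxc⟩
      have h1x : (0:ℝ) < 1 + x := by linarith
      have hlog1 : Real.log x ≤ Real.log (1+x) := Real.log_le_log hx0 (by linarith)
      have hlognn : 0 ≤ Real.log (1+x) := Real.log_nonneg (by linarith)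
      simp only [hΥdef] at hxc
      constructor
      · -- lower bound
        have hlx : -L ≤ Real.log x := by
          rw [hL, neg_le, le_div_iff₀ hα]
          nlinarith [mul_nonneg hα.le hlognn]
        calc Real.exp (-L) ≤ Real.exp (Real.log x) := Real.exp_le_exp.mpr hlx
          _ = x := Real.exp_log hx0
      · -- upper bound
        have hux : Real.log (1+x) ≤ L := by
          rw [hL, le_div_iff₀ hα]
          nlinarith
        calc x ≤ 1 + x := by linarith
          _ = Real.exp (Real.log (1+x)) := (Real.exp_log h1x).symm
          _ ≤ Real.exp L := Real.exp_le_exp.mpr hux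
    have hIccsub : Icc (Real.exp (-L)) (Real.exp L) ⊆ Ioi (0:ℝ) := by
      intro y hy
      exact lt_of_lt_of_le (Real.exp_pos _) hy.1
    have hSeq : {x : ℝ | 0 < x ∧ Υ x ≤ c}
        = Icc (Real.exp (-L)) (Real.exp L) ∩ Υ ⁻¹' (Iic c) := by
      ext y
      constructor
      · intro hy; exact ⟨hsub hy, hy.2⟩
      · intro hy; exact ⟨hIccsub hy.1, hy.2⟩
    rw [hSeq]
    exact IsCompact.of_isClosed_subset isCompact_Icc
      ((hsm.continuousOn.mono hIccsub).preimage_isClosed_of_isClosed isClosed_Icc isClosed_Iic)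
      inter_subset_left
  -- Hamiltonian bound
  · refine ⟨α * max B1 0 + α^2 * max B2 0, ?_⟩
    intro x hx
    have hx0 : (0:ℝ) < x := hx
    have h1x : (0:ℝ) < 1 + x := by linarith
    rw [hderiv x hx]
    set q : ℝ := α/(1+x) - α/(2*x) with hq
    have hC'nn : 0 ≤ α * max B1 0 + α^2 * max B2 0 := by positivity
    rcases le_or_gt q 0 with hq0 | hq0
    · refine le_trans (tsum_nonpos fun k => ?_) hC'nn
      have hkq : (k:ℝ) * q ≤ 0 := mul_nonpos_of_nonneg_of_nonpos (Nat.cast_nonneg k) hq0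
      have he : Real.exp ((k:ℝ) * q) - 1 ≤ 0 := by
        have := Real.exp_le_one_iff.mpr hkq; linarith
      exact mul_nonpos_of_nonneg_of_nonpos (mul_nonneg hx0.le (hvnn k x hx)) he
    · have hq1 : q ≤ α/(1+x) := by
        have : 0 ≤ α/(2*x) := by positivity
        simp only [hq]; linarith
      have hxq : x * q ≤ α := by
        have h1 : x * q ≤ x * (α/(1+x)) := mul_le_mul_of_nonneg_left hq1 hx0.le
        have h2 : x * (α/(1+x)) ≤ α := by
          rw [mul_div_assoc']
          rw [div_le_iff₀ h1x]
          nlinarith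
        exact le_trans h1 h2
      obtain ⟨hs1, ht1⟩ := aux_tsum_bound
        (f := fun k => (k:ℝ) * v k x) (fun k => mul_nonneg (Nat.cast_nonneg k) (hvnn k x hx))
        (hB1 x hx)
      obtain ⟨hs2, ht2⟩ := aux_tsum_bound
        (f := fun k => x * v k x * ((k:ℝ)^2/(1+x)^2) * Real.exp (α*k/(1+x)))
        (fun k => by
          have := hvnn k x hx
          positivity)
        (hB2 x hx)
      set g1 : ℕ → ℝ := fun k => (k:ℝ) * v k x
      set g2 : ℕ → ℝ := fun k => x * v k x * ((k:ℝ)^2/(1+x)^2) * Real.exp (α*k/(1+x))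
      have hsb : Summable (fun k => α * g1 k + α^2 * g2 k) :=
        (hs1.mul_left α).add (hs2.mul_left (α^2))
      have hab : ∀ k, x * v k x * (Real.exp ((k:ℝ) * q) - 1) ≤ α * g1 k + α^2 * g2 k := by
        intro k
        have hxv : 0 ≤ x * v k x := mul_nonneg hx0.le (hvnn k x hx)
        have hkq : 0 ≤ (k:ℝ) * q := mul_nonneg (Nat.cast_nonneg k) hq0.le
        have he := aux_exp_ineq ((k:ℝ)*q) hkq
        have step1 : x * v k x * (Real.exp ((k:ℝ) * q) - 1)
            ≤ x * v k x * ((k:ℝ)*q) + x * v k x * (((k:ℝ)*q)^2 * Real.exp ((k:ℝ)*q)) := by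
          have := mul_le_mul_of_nonneg_left he hxv
          nlinarith
        have hterm1 : x * v k x * ((k:ℝ)*q) ≤ α * g1 k := by
          have hkv : 0 ≤ (k:ℝ) * v k x := mul_nonneg (Nat.cast_nonneg k) (hvnn k x hx)
          have := mul_le_mul_of_nonneg_left hxq hkv
          simp only [g1]
          nlinarith
        have hterm2 : x * v k x * (((k:ℝ)*q)^2 * Real.exp ((k:ℝ)*q)) ≤ α^2 * g2 k := by
          have hqsq : q^2 ≤ (α/(1+x))^2 := pow_le_pow_left₀ hq0.le hq1 2
          have hexp' : Real.exp ((k:ℝ)*q) ≤ Real.exp (α*k/(1+x)) := by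
            apply Real.exp_le_exp.mpr
            have := mul_le_mul_of_nonneg_left hq1 (Nat.cast_nonneg k)
            calc (k:ℝ)*q ≤ (k:ℝ)*(α/(1+x)) := this
              _ = α*k/(1+x) := by ring
          have hA : ((k:ℝ)*q)^2 * Real.exp ((k:ℝ)*q)
              ≤ ((k:ℝ)^2*(α/(1+x))^2) * Real.exp (α*k/(1+x)) := by
            apply mul_le_mul _ hexp' (Real.exp_pos _).le (by positivity)
            rw [mul_pow]
            exact mul_le_mul_of_nonneg_left hqsq (sq_nonneg _)
          have := mul_le_mul_of_nonneg_left hA hxv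
          calc x * v k x * (((k:ℝ)*q)^2 * Real.exp ((k:ℝ)*q))
              ≤ x * v k x * (((k:ℝ)^2*(α/(1+x))^2) * Real.exp (α*k/(1+x))) := this
            _ = α^2 * g2 k := by simp only [g2]; field_simp
        linarith
      have hann : ∀ k, 0 ≤ x * v k x * (Real.exp ((k:ℝ) * q) - 1) := by
        intro k
        have hxv : 0 ≤ x * v k x := mul_nonneg hx0.le (hvnn k x hx)
        have hkq : 0 ≤ (k:ℝ) * q := mul_nonneg (Nat.cast_nonneg k) hq0.le
        have : (1:ℝ) ≤ Real.exp ((k:ℝ)*q) := Real.one_le_exp hkq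
        nlinarith
      have hsa : Summable (fun k => x * v k x * (Real.exp ((k:ℝ) * q) - 1)) :=
        Summable.of_nonneg_of_le hann hab hsb
      calc (∑' k : ℕ, x * v k x * (Real.exp ((k:ℝ) * q) - 1))
          ≤ ∑' k : ℕ, (α * g1 k + α^2 * g2 k) := Summable.tsum_le_tsum hab hsa hsb
        _ = α * (∑' k, g1 k) + α^2 * (∑' k, g2 k) := by
            rw [Summable.tsum_add (hs1.mul_left α) (hs2.mul_left (α^2)), tsum_mul_left, tsum_mul_left]
        _ ≤ α * max B1 0 + α^2 * max B2 0 := by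
            have := mul_le_mul_of_nonneg_left ht1 hα.le
            have := mul_le_mul_of_nonneg_left ht2 (sq_nonneg α)
            linarith
end
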